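/- arXiv:2107.02843 — 10 statements merged into one kernel-verified Lean document; each statement's English description precedes it below -/
import Mathlib

section
/- Let G be a group and (X,d) a proper metric space (i.e., closed bounded subsets of X are compact) equipped with an isometric G-action. Let D and D' be subsets of [0,∞) × X × G; for a point y = (s,x,g) of [0,∞) × X × G write s_y := s, x_y := x, g_y := g. Let H and H' be complex Hilbert spaces equipped with orthogonal decompositions (H_y)_{y∈D} of H and (H'_{y'})_{y'∈D'} of H', with orthogonal projections P_y and P'_{y'}. Assume: (a) every H_y and every H'_{y'} is finite dimensional; (b) for every n ∈ ℕ and every compact subset B of X the sets {y ∈ D : s_y ≤ n and x_y ∈ B} and {y' ∈ D' : s_{y'} ≤ n and x_{y'} ∈ B} are finite; (c) D ∪ D' is locally uniformly finite: for every compact B ⊆ X, every m ∈ ℕ and every finite F ⊆ G there is N ∈ ℕ such that for every (s,x,g) ∈ [0,∞) × X × G the set of z ∈ D ∪ D' with x_z ∈ B, |s_z − s| ≤ m, d(x_z,x) ≤ m, max(s,s_z)·d(x_z,x) ≤ m and g⁻¹g_z ∈ F has at most N elements. For a bounded continuous function f : X → ℂ let Φ(f) : H → H and Φ'(f) : H'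 → H' be the unique bounded operators with Φ(f)v = f(x_y)·v for v ∈ H_y and Φ'(f)w = f(x_{y'})·w for w ∈ H'_{y'}. Let A : H → H' be a bounded operator which is controlled, i.e., there exist m ∈ ℕ and a finite subset F of G such that P'_{y'} ∘ A ∘ P_y = 0 unless |s_y − s_{y'}| ≤ m, d(x_y,x_{y'}) ≤ m, max(s_y,s_{y'})·d(x_y,x_{y'}) ≤ m and g_y⁻¹g_{y'} ∈ F. Then for every continuous function f : X → ℂ vanishing at infinity, the operator Φ'(f) ∘ A − A ∘ Φ(f) is a compact operator from H to H'. -/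
open scoped NNReal

/-- An orthogonal decomposition of a complex Hilbert space indexed by `I`, presented by the
family of orthogonal projections onto its members: a family of mutually orthogonal
self-adjoint idempotents whose ranges have dense algebraic span. -/
structure OrthogonalDecomposition {I H : Type*} [NormedAddCommGroup H]
    [InnerProductSpace ℂ H] [CompleteSpace H] (P : I → (H →L[ℂ] H)) : Prop where
  isSelfAdjoint : ∀ i, IsSelfAdjoint (P i)
  idempotent : ∀ i, (P i).comp (P i) = P i
  orthogonal : ∀ i j, i ≠ j → (P i).comp (P j) = 0
  denseSpan : Dense (((⨆ i, LinearMap.range (P i : H →ₗ[ℂ] H)) : Submodule ℂ H) : Set H)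

namespace PseudoLocalityAux

local notation "⟪" x ", " y "⟫" => @inner ℂ _ _ x y

variable {I : Type*} {E : Type*} [NormedAddCommGroup E] [InnerProductSpace ℂ E] [CompleteSpace E]

lemma sa_inner {T : E →L[ℂ] E} (hT : IsSelfAdjoint T) (x y : E) :
    ⟪T x, y⟫ = ⟪x, T y⟫ := by
  conv_lhs => rw [← hT.adjoint_eq]
  exact ContinuousLinearMap.adjoint_inner_left T y x

lemma contraction {T : E →L[ℂ] E} (hsa : IsSelfAdjoint T) (hid : T.comp T = T) (v : E) :
    ‖T v‖ ≤ ‖v‖ := by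
  have hTT : T (T v) = T v := by
    have := congrArg (fun (S : E →L[ℂ] E) => S v) hid
    simpa using this
  have h1 : (‖T v‖ : ℝ) ^ 2 = RCLike.re ⟪T v, T v⟫ := (inner_self_eq_norm_sq _).symm
  have h2 : ⟪T v, T v⟫ = ⟪v, T v⟫ := by
    rw [sa_inner hsa, hTT]
  have h3 : ‖T v‖ ^ 2 ≤ ‖v‖ * ‖T v‖ := by
    rw [h1, h2]
    calc RCLike.re ⟪v, T v⟫ ≤ ‖(⟪v, T v⟫ : ℂ)‖ := RCLike.re_le_norm _
    _ ≤ ‖v‖ * ‖T v‖ := norm_inner_le_norm _ _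
  rcases eq_or_lt_of_le (norm_nonneg (T v)) with h | h
  · rw [← h]; exact norm_nonneg v
  · nlinarith

variable {P : I → (E →L[ℂ] E)}

lemma PP_same (hP : OrthogonalDecomposition P) (i : I) (v : E) : P i (P i v) = P i v := by
  have := congrArg (fun (S : E →L[ℂ] E) => S v) (hP.idempotent i)
  simpa using this

lemma PP_ne (hP : OrthogonalDecomposition P) {i j : I} (hij : i ≠ j) (v : E) :
    P i (P j v) = 0 := by
  have := hP.orthogonal i j hij
  calc P i (P j v) = ((P i).comp (P j)) v := rfl
  _ = (0 : E →L[ℂ] E) v := by rw [this]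
  _ = 0 := rfl

lemma Q_sa (hP : OrthogonalDecomposition P) (S : Finset I) :
    IsSelfAdjoint (∑ i ∈ S, P i) := by
  unfold IsSelfAdjoint
  rw [star_sum]
  exact Finset.sum_congr rfl fun i _ => hP.isSelfAdjoint i

lemma Q_idem (hP : OrthogonalDecomposition P) (S : Finset I) :
    (∑ i ∈ S, P i).comp (∑ i ∈ S, P i) = (∑ i ∈ S, P i) := by
  rw [ContinuousLinearMap.finset_sum_comp]
  refine Finset.sum_congr rfl fun i hi => ?_
  rw [ContinuousLinearMap.comp_finset_sum]
  rw [Finset.sum_eq_single i (fun j hj hne => hP.orthogonal i j (Ne.symm hne))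
    (by intro h; exact absurd hi h)]
  exact hP.idempotent i

lemma Q_contraction (hP : OrthogonalDecomposition P) (S : Finset I) (v : E) :
    ‖(∑ i ∈ S, P i) v‖ ≤ ‖v‖ :=
  contraction (Q_sa hP S) (Q_idem hP S) v

lemma sum_sq_eq (hP : OrthogonalDecomposition P) (S : Finset I) (v : E) :
    ∑ i ∈ S, ‖P i v‖ ^ 2 = ‖(∑ i ∈ S, P i) v‖ ^ 2 := by
  have hterm : ∀ i : I, (‖P i v‖ : ℝ) ^ 2 = RCLike.re ⟪v, P i v⟫ := by
    intro i
    rw [← inner_self_eq_norm_sq (𝕜 := ℂ)]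
    congr 1
    rw [sa_inner (hP.isSelfAdjoint i), PP_same hP]
  have hQ : (‖(∑ i ∈ S, P i) v‖ : ℝ) ^ 2 = RCLike.re ⟪v, (∑ i ∈ S, P i) v⟫ := by
    rw [← inner_self_eq_norm_sq (𝕜 := ℂ)]
    congr 1
    rw [sa_inner (Q_sa hP S)]
    congr 1
    conv_rhs => rw [← Q_idem hP S]
    rfl
  rw [hQ, ContinuousLinearMap.sum_apply, inner_sum, map_sum]
  exact Finset.sum_congr rfl fun i _ => hterm i

lemma bessel (hP : OrthogonalDecomposition P) (S : Finset I) (v : E) :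
    ∑ i ∈ S, ‖P i v‖ ^ 2 ≤ ‖v‖ ^ 2 := by
  rw [sum_sq_eq hP S v]
  have := Q_contraction hP S v
  have h0 := norm_nonneg ((∑ i ∈ S, P i) v)
  nlinarith

lemma approx (hP : OrthogonalDecomposition P) (w : E) {ε : ℝ} (hε : 0 < ε) :
    ∃ S₀ : Finset I, ∀ S : Finset I, S₀ ⊆ S → ‖w - (∑ i ∈ S, P i) w‖ ≤ ε := by
  obtain ⟨u, hu, hdist⟩ := hP.denseSpan.exists_dist_lt w (half_pos hε)
  rw [SetLike.mem_coe, Submodule.mem_iSup_iff_exists_finset] at hu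
  obtain ⟨S₀, huS⟩ := hu
  refine ⟨S₀, fun S hSS => ?_⟩
  have hQu : (∑ i ∈ S, P i) u = u := by
    refine Submodule.iSup_induction (motive := fun x => (∑ i ∈ S, P i) x = x)
      (fun i => ⨆ _ : i ∈ S₀, LinearMap.range (P i : E →ₗ[ℂ] E)) huS ?_ (map_zero _) ?_
    · intro i x hx
      change x ∈ ⨆ _ : i ∈ S₀, LinearMap.range (P i : E →ₗ[ℂ] E) at hx
      by_cases hi : i ∈ S₀
      · rw [iSup_pos hi] at hx
        obtain ⟨z, rfl⟩ := hx
        rw [ContinuousLinearMap.coe_coe]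
        rw [ContinuousLinearMap.sum_apply]
        rw [Finset.sum_eq_single i (fun j hj hne => PP_ne hP hne z)
          (fun h => absurd (hSS hi) h)]
        exact PP_same hP i z
      · rw [iSup_neg hi] at hx
        simp only [Submodule.mem_bot] at hx
        rw [hx, map_zero]
    · intro x y hx hy
      rw [map_add, hx, hy]
  have : w - (∑ i ∈ S, P i) w = (w - u) - (∑ i ∈ S, P i) (w - u) := by
    rw [map_sub, hQu]; abel
  rw [this]
  calc ‖(w - u) - (∑ i ∈ S, P i) (w - u)‖
      ≤ ‖w - u‖ + ‖(∑ i ∈ S, P i) (w - u)‖ := norm_sub_le _ _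
  _ ≤ ‖w - u‖ + ‖w - u‖ := by linarith [Q_contraction hP S (w - u)]
  _ ≤ ε := by rw [dist_eq_norm] at hdist; linarith

lemma norm_le_of_rows (hP : OrthogonalDecomposition P) (w : E) {c : ℝ} (hc : 0 ≤ c)
    (hr : ∀ S : Finset I, ∑ i ∈ S, ‖P i w‖ ^ 2 ≤ c ^ 2) : ‖w‖ ≤ c := by
  refine le_of_forall_pos_le_add fun η hη => ?_
  obtain ⟨S₀, hS₀⟩ := approx hP w hη
  have h1 : ‖(∑ i ∈ S₀, P i) w‖ ≤ c := by
    have := hr S₀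
    rw [sum_sq_eq hP S₀ w] at this
    nlinarith [norm_nonneg ((∑ i ∈ S₀, P i) w)]
  calc ‖w‖ ≤ ‖(∑ i ∈ S₀, P i) w‖ + ‖w - (∑ i ∈ S₀, P i) w‖ := by
        have := norm_add_le ((∑ i ∈ S₀, P i) w) (w - (∑ i ∈ S₀, P i) w)
        simpa using this
  _ ≤ c + η := add_le_add h1 (hS₀ S₀ (Finset.Subset.refl _))

omit [CompleteSpace E] in
lemma pythagoras (S : Finset I) (u : I → E)
    (ho : ∀ i ∈ S, ∀ j ∈ S, i ≠ j → ⟪u i, u j⟫ = 0) :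
    ‖∑ i ∈ S, u i‖ ^ 2 = ∑ i ∈ S, ‖u i‖ ^ 2 := by
  have : (‖∑ i ∈ S, u i‖ : ℝ) ^ 2 = RCLike.re ⟪∑ i ∈ S, u i, ∑ j ∈ S, u j⟫ :=
    (inner_self_eq_norm_sq _).symm
  rw [this, sum_inner, map_sum]
  refine Finset.sum_congr rfl fun i hi => ?_
  rw [inner_sum, Finset.sum_eq_single i (fun j hj hne => ho i hi j hj (Ne.symm hne))
    (fun h => absurd hi h)]
  exact inner_self_eq_norm_sq _

lemma isCompactOperator_of_finiteDimensional_range {F : Type*} [NormedAddCommGroup F]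
    [NormedSpace ℂ F] (T : E →L[ℂ] F)
    (hT : FiniteDimensional ℂ (LinearMap.range (T : E →ₗ[ℂ] F))) : IsCompactOperator ⇑T := by
  set R : Submodule ℂ F := LinearMap.range (T : E →ₗ[ℂ] F) with hR
  have hclosed : IsClosed (R : Set F) := R.closed_of_finiteDimensional
  set K : Set F := closure (⇑T '' Metric.ball 0 1) with hK
  have hKR : K ⊆ (R : Set F) := by
    refine closure_minimal ?_ hclosed
    rintro y ⟨x, -, rfl⟩
    exact LinearMap.mem_range_self _ x
  have hKb : Bornology.IsBounded K := by
    refine Bornology.IsBounded.closure ?_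
    obtain ⟨C, hC0, hC⟩ := T.isBoundedLinearMap.bound
    refine (Metric.isBounded_ball (x := (0 : F)) (r := C)).subset ?_
    rintro y ⟨x, hx, rfl⟩
    rw [Metric.mem_ball, dist_zero_right]
    calc ‖T x‖ ≤ C * ‖x‖ := hC x
    _ < C * 1 := by
        have hx1 : ‖x‖ < 1 := by rwa [Metric.mem_ball, dist_zero_right] at hx
        exact (mul_lt_mul_iff_right₀ hC0).mpr hx1
    _ = C := mul_one C
  have hKcomp : IsCompact K := by
    set K₀ : Set R := Subtype.val ⁻¹' K with hK₀
    have h0closed : IsClosed K₀ := isClosed_closure.preimage continuous_subtype_val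
    have h0b : Bornology.IsBounded K₀ := by
      rw [Metric.isBounded_iff] at hKb ⊢
      obtain ⟨C, hC⟩ := hKb
      exact ⟨C, fun x hx y hy => hC hx hy⟩
    have h0comp : IsCompact K₀ := Metric.isCompact_of_isClosed_isBounded h0closed h0b
    have : Subtype.val '' K₀ = K := by
      apply Set.eq_of_subset_of_subset
      · rintro y ⟨z, hz, rfl⟩; exact hz
      · intro y hy; exact ⟨⟨y, hKR hy⟩, hy, rfl⟩
    rw [← this]
    exact h0comp.image continuous_subtype_val
  exact ⟨K, hKcomp, Filter.mem_of_superset (Metric.ball_mem_nhds 0 one_pos)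
    fun x hx => subset_closure (Set.mem_image_of_mem _ hx)⟩

lemma inner_P_ne (hP : OrthogonalDecomposition P) {i j : I} (hij : i ≠ j) (v w : E) :
    ⟪P i v, P j w⟫ = 0 := by
  rw [sa_inner (hP.isSelfAdjoint i), PP_ne hP hij]
  exact inner_zero_right _

lemma diag_summable (hP : OrthogonalDecomposition P) (b : I → ℂ) {c : ℝ}
    (hb : ∀ i, ‖b i‖ ≤ c) (v : E) : Summable (fun i => b i • P i v) := by
  have hr : Summable (fun i => ‖P i v‖ ^ 2) :=
    summable_of_sum_le (fun i => sq_nonneg _) (fun S => bessel hP S v)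
  rw [summable_iff_vanishing] at hr ⊢
  intro e he
  obtain ⟨ε, hε, hball⟩ := Metric.mem_nhds_iff.mp he
  obtain ⟨s, hs⟩ := hr (Metric.ball 0 (ε ^ 2 / (c ^ 2 + 1)))
    (Metric.ball_mem_nhds 0 (by positivity))
  refine ⟨s, fun t ht => ?_⟩
  apply hball
  rw [Metric.mem_ball, dist_zero_right]
  have hsum := hs t ht
  rw [Metric.mem_ball, dist_zero_right, Real.norm_eq_abs] at hsum
  have habs : ∑ i ∈ t, ‖P i v‖ ^ 2 < ε ^ 2 / (c ^ 2 + 1) :=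
    lt_of_abs_lt hsum
  have hpyth : ‖∑ i ∈ t, b i • P i v‖ ^ 2 = ∑ i ∈ t, ‖b i • P i v‖ ^ 2 :=
    pythagoras t _ (fun i _ j _ hij => by
      rw [inner_smul_left, inner_smul_right, inner_P_ne hP hij, mul_zero, mul_zero])
  have hterm : ∀ i, ‖b i • P i v‖ ^ 2 ≤ c ^ 2 * ‖P i v‖ ^ 2 := by
    intro i
    rw [norm_smul, mul_pow]
    have h1 : ‖b i‖ ^ 2 ≤ c ^ 2 := by nlinarith [norm_nonneg (b i), hb i]
    exact mul_le_mul_of_nonneg_right h1 (sq_nonneg _)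
  have h2 : ‖∑ i ∈ t, b i • P i v‖ ^ 2 < ε ^ 2 := by
    rw [hpyth]
    calc ∑ i ∈ t, ‖b i • P i v‖ ^ 2 ≤ ∑ i ∈ t, c ^ 2 * ‖P i v‖ ^ 2 :=
          Finset.sum_le_sum fun i _ => hterm i
    _ = c ^ 2 * ∑ i ∈ t, ‖P i v‖ ^ 2 := by rw [Finset.mul_sum]
    _ ≤ c ^ 2 * (ε ^ 2 / (c ^ 2 + 1)) := by
        have h0 : (0:ℝ) ≤ ∑ i ∈ t, ‖P i v‖ ^ 2 := Finset.sum_nonneg fun i _ => sq_nonneg _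
        nlinarith [sq_nonneg c]
    _ = ε ^ 2 * (c ^ 2 / (c ^ 2 + 1)) := by ring
    _ < ε ^ 2 * 1 := by
        refine mul_lt_mul_of_pos_left ?_ (pow_pos hε 2)
        rw [div_lt_one (by positivity)]
        linarith
    _ = ε ^ 2 := mul_one _
  exact lt_of_pow_lt_pow_left₀ 2 (le_of_lt hε) h2

lemma diag (hP : OrthogonalDecomposition P) (b : I → ℂ) {c : ℝ} (hc : 0 ≤ c)
    (hb : ∀ i, ‖b i‖ ≤ c) :
    ∃ Ψ : E →L[ℂ] E, (∀ i v, Ψ (P i v) = b i • P i v) ∧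
      (∀ i v, P i (Ψ v) = b i • P i v) ∧ (∀ v, ‖Ψ v‖ ≤ c * ‖v‖) := by
  have hsum := diag_summable hP b hb
  set Ψ₀ : E →ₗ[ℂ] E :=
    { toFun := fun v => ∑' i, b i • P i v
      map_add' := by
        intro v w
        show (∑' i, b i • P i (v + w)) = (∑' i, b i • P i v) + ∑' i, b i • P i w
        simp only [map_add, smul_add]
        exact Summable.tsum_add (hsum v) (hsum w)
      map_smul' := by
        intro a v
        show (∑' i, b i • P i (a • v)) = a • ∑' i, b i • P i v
        rw [← Summable.tsum_const_smul a (hsum v)]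
        congr 1; funext i
        rw [map_smul, smul_comm] } with hΨ₀
  have hrow : ∀ i v, P i (Ψ₀ v) = b i • P i v := by
    intro i v
    have : P i (Ψ₀ v) = ∑' j, P i (b j • P j v) :=
      ContinuousLinearMap.map_tsum (P i) (hsum v)
    rw [this, tsum_eq_single i
      (fun j hj => by rw [map_smul, PP_ne hP (Ne.symm hj), smul_zero])]
    rw [map_smul, PP_same hP]
  have hcol : ∀ i v, Ψ₀ (P i v) = b i • P i v := by
    intro i v
    show (∑' j, b j • P j (P i v)) = b i • P i v
    rw [tsum_eq_single i (fun j hj => by rw [PP_ne hP hj, smul_zero])]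
    rw [PP_same hP]
  have hbound : ∀ v, ‖Ψ₀ v‖ ≤ c * ‖v‖ := by
    intro v
    refine norm_le_of_rows hP _ (by positivity) fun S => ?_
    have hterm : ∀ i ∈ S, ‖P i (Ψ₀ v)‖ ^ 2 ≤ c ^ 2 * ‖P i v‖ ^ 2 := by
      intro i _
      rw [hrow i v, norm_smul, mul_pow]
      have h1 : ‖b i‖ ^ 2 ≤ c ^ 2 := by nlinarith [norm_nonneg (b i), hb i]
      exact mul_le_mul_of_nonneg_right h1 (sq_nonneg _)
    calc ∑ i ∈ S, ‖P i (Ψ₀ v)‖ ^ 2 ≤ ∑ i ∈ S, c ^ 2 * ‖P i v‖ ^ 2 :=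
          Finset.sum_le_sum hterm
    _ = c ^ 2 * ∑ i ∈ S, ‖P i v‖ ^ 2 := by rw [Finset.mul_sum]
    _ ≤ c ^ 2 * ‖v‖ ^ 2 := by
        have := bessel hP S v
        have h0 : (0:ℝ) ≤ ∑ i ∈ S, ‖P i v‖ ^ 2 := Finset.sum_nonneg fun i _ => sq_nonneg _
        nlinarith [sq_nonneg c]
    _ = (c * ‖v‖) ^ 2 := by ring
  exact ⟨Ψ₀.mkContinuous c hbound, hcol, hrow, hbound⟩

lemma rows_eq (hP : OrthogonalDecomposition P) (Φ : E →L[ℂ] E) (b : I → ℂ)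
    (hcolv : ∀ i v, Φ (P i v) = b i • P i v) : ∀ i v, P i (Φ v) = b i • P i v := by
  intro i
  have : (fun v => P i (Φ v)) = fun v => b i • P i v := by
    refine Continuous.ext_on hP.denseSpan ((P i).continuous.comp Φ.continuous)
      ((P i).continuous.const_smul (b i)) ?_
    intro u hu
    rw [SetLike.mem_coe] at hu
    refine Submodule.iSup_induction (motive := fun x => P i (Φ x) = b i • P i x)
      (fun j => LinearMap.range (P j : E →ₗ[ℂ] E)) hu ?_ (by simp) ?_
    · rintro j x ⟨z, rfl⟩
      rw [ContinuousLinearMap.coe_coe]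
      rw [hcolv j z, map_smul]
      by_cases hij : i = j
      · subst hij; rfl
      · rw [PP_ne hP hij, smul_zero, smul_zero]
    · intro x y hx hy
      rw [map_add, map_add, map_add, smul_add, hx, hy]
  exact fun v => congrFun this v

end PseudoLocalityAux

set_option maxHeartbeats 2000000 in
open PseudoLocalityAux in
/-- **Pseudolocality of controlled operators** (Lemma 6.2 of Bunke–Engel–Land, specialized to
trivial coefficients and to the metric scale on a proper metric space): if `A` is a controlled
operator between decomposed Hilbert spaces over the scaled cone `[0,∞) × X × G`, then for every
function `f : X → ℂ` vanishing at infinity the commutator `Φ'(f) ∘ A − A ∘ Φ(f)` is compact. -/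
theorem pseudolocality_of_equivariantly_controlled_operators
    {G : Type*} [Group G] {X : Type*} [MetricSpace X] [ProperSpace X]
    [MulAction G X] (hiso : ∀ g : G, Isometry (fun x : X => g • x))
    {H H' : Type*}
    [NormedAddCommGroup H] [InnerProductSpace ℂ H] [CompleteSpace H]
    [NormedAddCommGroup H'] [InnerProductSpace ℂ H'] [CompleteSpace H']
    (D D' : Set (ℝ≥0 × X × G))
    (P : D → (H →L[ℂ] H)) (P' : D' → (H' →L[ℂ] H'))
    (hP : OrthogonalDecomposition P) (hP' : OrthogonalDecomposition P')
    -- (a) the members of the decompositions are finite-dimensional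
    (hfin : ∀ y : D, FiniteDimensional ℂ (LinearMap.range (P y : H →ₗ[ℂ] H)))
    (hfin' : ∀ y' : D', FiniteDimensional ℂ (LinearMap.range (P' y' : H' →ₗ[ℂ] H')))
    -- (b) local finiteness of the index sets
    (hD : ∀ (n : ℕ) (B : Set X), IsCompact B →
      {y : D | (y.1.1 : ℝ) ≤ n ∧ y.1.2.1 ∈ B}.Finite)
    (hD' : ∀ (n : ℕ) (B : Set X), IsCompact B →
      {y' : D' | (y'.1.1 : ℝ) ≤ n ∧ y'.1.2.1 ∈ B}.Finite)
    -- (c) `D ∪ D'` is locally uniformly finite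
    (hluf : ∀ (B : Set X), IsCompact B → ∀ (m : ℕ) (F : Finset G), ∃ N : ℕ,
      ∀ (s : ℝ≥0) (x : X) (g : G),
        {z : ℝ≥0 × X × G | z ∈ D ∪ D' ∧ z.2.1 ∈ B ∧ |(z.1 : ℝ) - (s : ℝ)| ≤ (m : ℝ) ∧
            dist z.2.1 x ≤ (m : ℝ) ∧ max (s : ℝ) (z.1 : ℝ) * dist z.2.1 x ≤ (m : ℝ) ∧
            g⁻¹ * z.2.2 ∈ F}.Finite ∧
        {z : ℝ≥0 × X × G | z ∈ D ∪ D' ∧ z.2.1 ∈ B ∧ |(z.1 : ℝ) - (s : ℝ)| ≤ (m : ℝ) ∧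
            dist z.2.1 x ≤ (m : ℝ) ∧ max (s : ℝ) (z.1 : ℝ) * dist z.2.1 x ≤ (m : ℝ) ∧
            g⁻¹ * z.2.2 ∈ F}.ncard ≤ N)
    (A : H →L[ℂ] H')
    -- `A` is controlled
    (hA : ∃ (m : ℕ) (F : Finset G), ∀ (y : D) (y' : D'),
      ¬(|(y.1.1 : ℝ) - (y'.1.1 : ℝ)| ≤ (m : ℝ) ∧
          dist y.1.2.1 y'.1.2.1 ≤ (m : ℝ) ∧
          max (y.1.1 : ℝ) (y'.1.1 : ℝ) * dist y.1.2.1 y'.1.2.1 ≤ (m : ℝ) ∧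
          y.1.2.2⁻¹ * y'.1.2.2 ∈ F) →
        (P' y').comp (A.comp (P y)) = 0)
    -- `f` is continuous and vanishes at infinity
    (f : X → ℂ) (hf : Continuous f)
    (hf0 : ∀ ε : ℝ, 0 < ε → IsCompact {x : X | ε ≤ ‖f x‖})
    -- the diagonal multiplication operators associated with `f`
    (Φ : H →L[ℂ] H) (Φ' : H' →L[ℂ] H')
    (hΦ : ∀ (y : D) (v : H), P y v = v → Φ v = f y.1.2.1 • v)
    (hΦ' : ∀ (y' : D') (w : H'), P' y' w = w → Φ' w = f y'.1.2.1 • w) :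
    IsCompactOperator ⇑(Φ'.comp A - A.comp Φ) := by
  classical
  obtain ⟨m, F, hAc⟩ := hA
  set T : H →L[ℂ] H' := Φ'.comp A - A.comp Φ with hTdef
  -- it suffices to approximate `T` in norm by compact operators
  suffices key : ∀ ε : ℝ, 0 < ε → ∃ C : H →L[ℂ] H', IsCompactOperator ⇑C ∧ ‖T - C‖ ≤ ε by
    choose C hCc hCn using fun kk : ℕ => key (1/(kk+1)) (by positivity)
    have htend : Filter.Tendsto C Filter.atTop (nhds T) := by
      refine tendsto_iff_dist_tendsto_zero.mpr ?_
      refine squeeze_zero (fun kk => dist_nonneg) (fun kk => ?_)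
        tendsto_one_div_add_atTop_nhds_zero_nat
      rw [dist_eq_norm, ← norm_neg]
      calc ‖-(C kk - T)‖ = ‖T - C kk‖ := by rw [neg_sub]
      _ ≤ 1 / (kk + 1) := hCn kk
    exact isCompactOperator_of_tendsto htend (Filter.Eventually.of_forall hCc)
  intro ε hε
  -- notation for the coordinates
  set a : ℝ := ‖A‖ with hadef
  have ha : 0 ≤ a := norm_nonneg A
  -- a global bound for `f`
  obtain ⟨cf, hcf0, hcf⟩ : ∃ cf : ℝ, 0 ≤ cf ∧ ∀ x : X, ‖f x‖ ≤ cf := by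
    obtain ⟨M, hM⟩ := ((hf0 1 one_pos).image (continuous_norm.comp hf)).bddAbove
    refine ⟨max M 1, le_trans zero_le_one (le_max_right M 1), fun x => ?_⟩
    by_cases hx : 1 ≤ ‖f x‖
    · exact le_max_of_le_left (hM ⟨x, hx, rfl⟩)
    · exact le_max_of_le_right (le_of_not_ge hx)
  -- the cutoff function
  set ε₁ : ℝ := ε / (8 * (a + 1)) with hε₁def
  have hε₁ : 0 < ε₁ := by positivity
  set χ : X → ℝ := fun x => min 1 (max 0 (‖f x‖ / ε₁ - 1)) with hχdef
  have hχ0 : ∀ x, 0 ≤ χ x := fun x => le_min zero_le_one (le_max_left 0 _)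
  have hχ1 : ∀ x, χ x ≤ 1 := fun x => min_le_left _ _
  have hχcont : Continuous χ :=
    (continuous_const.min (continuous_const.max
      (((continuous_norm.comp hf).div_const ε₁).sub continuous_const)))
  set k : X → ℂ := fun x => (χ x : ℝ) • f x with hkdef
  have hkcont : Continuous k := (Complex.continuous_ofReal.comp hχcont).smul hf
  have hknorm : ∀ x, ‖k x‖ ≤ ‖f x‖ := by
    intro x
    rw [hkdef]
    simp only [norm_smul, Real.norm_eq_abs, abs_of_nonneg (hχ0 x)]
    calc χ x * ‖f x‖ ≤ 1 * ‖f x‖ :=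
      mul_le_mul_of_nonneg_right (hχ1 x) (norm_nonneg _)
    _ = ‖f x‖ := one_mul _
  have hkcf : ∀ x, ‖k x‖ ≤ cf := fun x => le_trans (hknorm x) (hcf x)
  set K₁ : Set X := {x : X | ε₁ ≤ ‖f x‖} with hK₁def
  have hK₁ : IsCompact K₁ := hf0 ε₁ hε₁
  have hsupp : ∀ x : X, k x ≠ 0 → x ∈ K₁ := by
    intro x hx
    by_contra hxK
    have : ‖f x‖ < ε₁ := lt_of_not_ge hxK
    have hχx : χ x = 0 := by
      rw [hχdef]
      simp only []
      have : ‖f x‖ / ε₁ - 1 < 0 := by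
        rw [sub_neg, div_lt_one hε₁]; exact this
      rw [max_eq_left this.le, min_eq_right zero_le_one]
    apply hx
    rw [hkdef]; simp only [hχx, Complex.ofReal_zero, zero_smul]
  have hfk : ∀ x : X, ‖f x - k x‖ ≤ 2 * ε₁ := by
    intro x
    have hfk' : f x - k x = ((1 - χ x : ℝ)) • f x := by
      rw [hkdef]; simp only [sub_smul, one_smul]
    rw [hfk', norm_smul, Real.norm_eq_abs, abs_of_nonneg (by linarith [hχ1 x])]
    by_cases hx : ‖f x‖ ≤ 2 * ε₁
    · calc (1 - χ x) * ‖f x‖ ≤ 1 * ‖f x‖ :=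
        mul_le_mul_of_nonneg_right (by linarith [hχ0 x]) (norm_nonneg _)
      _ = ‖f x‖ := one_mul _
      _ ≤ 2 * ε₁ := hx
    · have hx2 : 2 * ε₁ < ‖f x‖ := lt_of_not_ge hx
      have hχx : χ x = 1 := by
        rw [hχdef]
        simp only []
        have h1 : (1:ℝ) ≤ ‖f x‖ / ε₁ - 1 := by
          have h2 : (2:ℝ) ≤ ‖f x‖ / ε₁ := by
            rw [le_div_iff₀ hε₁]; linarith
          linarith
        rw [max_eq_right (le_trans zero_le_one h1), min_eq_left h1]
      rw [hχx]
      simp only [sub_self, zero_mul]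
      positivity
  -- `k` is uniformly continuous
  have hk0 : Filter.Tendsto k (Filter.cocompact X) (nhds 0) := by
    rw [Metric.tendsto_nhds]
    intro ε' hε'
    rw [Filter.eventually_iff]
    refine Filter.mem_cocompact.mpr ⟨{x : X | ε' ≤ ‖f x‖}, hf0 ε' hε', ?_⟩
    intro x hx
    simp only [Set.mem_compl_iff, Set.mem_setOf_eq, not_le] at hx
    simp only [Set.mem_setOf_eq, dist_zero_right]
    exact lt_of_le_of_lt (hknorm x) hx
  have hkuc : UniformContinuous k := hkcont.uniformContinuous_of_tendsto_cocompact hk0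
  -- localization set and the uniform multiplicity bound
  set B : Set X := Metric.cthickening (m : ℝ) K₁ with hBdef
  have hBc : IsCompact B := hK₁.cthickening
  have hK₁B : K₁ ⊆ B := Metric.self_subset_cthickening K₁
  set Fh : Finset G := F ∪ F.image (fun g => g⁻¹) with hFhdef
  obtain ⟨N, hN⟩ := hluf B hBc m Fh
  -- the second scale
  set ε₂ : ℝ := ε / (2 * (N + 1) * (a + 1)) with hε₂def
  have hε₂ : 0 < ε₂ := by positivity
  obtain ⟨δ, hδ0, hδ⟩ := Metric.uniformContinuous_iff.mp hkuc ε₂ hε₂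
  set n : ℕ := ⌈(m : ℝ) / δ⌉₊ + 1 with hndef
  have hn0 : (0:ℝ) < n := by positivity
  have hmn : (m : ℝ) / n < δ := by
    rw [div_lt_iff₀ hn0]
    have h1 : (m : ℝ) / δ < n := by
      calc (m : ℝ) / δ ≤ ⌈(m : ℝ) / δ⌉₊ := Nat.le_ceil _
      _ < n := by rw [hndef]; exact_mod_cast Nat.lt_succ_self _
    calc (m : ℝ) = ((m : ℝ) / δ) * δ := by field_simp
    _ < n * δ := by exact mul_lt_mul_of_pos_right h1 hδ0
    _ = δ * n := mul_comm _ _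
  -- the finite truncation sets
  have hSfin := hD (n + m) B hBc
  have hS'fin := hD' (n + m) B hBc
  set Sf : Finset D := hSfin.toFinset with hSfdef
  set Sf' : Finset D' := hS'fin.toFinset with hSf'def
  have hSfmem : ∀ y : D, y ∈ Sf ↔ ((y.1.1 : ℝ) ≤ ((n + m : ℕ) : ℝ) ∧ y.1.2.1 ∈ B) := by
    intro y; rw [hSfdef, Set.Finite.mem_toFinset]; rfl
  have hSf'mem : ∀ y' : D', y' ∈ Sf' ↔ ((y'.1.1 : ℝ) ≤ ((n + m : ℕ) : ℝ) ∧ y'.1.2.1 ∈ B) := by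
    intro y'; rw [hSf'def, Set.Finite.mem_toFinset]; rfl
  -- the diagonal operators with symbol `k`
  obtain ⟨Ψ, hΨcol, hΨrow, hΨb⟩ := diag hP (fun y : D => k y.1.2.1) hcf0 (fun y => hkcf _)
  obtain ⟨Ψ', hΨ'col, hΨ'row, hΨ'b⟩ := diag hP' (fun y' : D' => k y'.1.2.1) hcf0 (fun y' => hkcf _)
  -- row identities for the given diagonal operators
  have hΦcol : ∀ (y : D) (v : H), Φ (P y v) = f y.1.2.1 • P y v :=
    fun y v => hΦ y (P y v) (PP_same hP y v)
  have hΦ'col : ∀ (y' : D') (w : H'), Φ' (P' y' w) = f y'.1.2.1 • P' y' w :=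
    fun y' w => hΦ' y' (P' y' w) (PP_same hP' y' w)
  have hΦrow : ∀ (y : D) (v : H), P y (Φ v) = f y.1.2.1 • P y v :=
    rows_eq hP Φ (fun y => f y.1.2.1) hΦcol
  have hΦ'row : ∀ (y' : D') (w : H'), P' y' (Φ' w) = f y'.1.2.1 • P' y' w :=
    rows_eq hP' Φ' (fun y' => f y'.1.2.1) hΦ'col
  -- the truncated commutator and the candidate compact approximant
  set Th : H →L[ℂ] H' := Ψ'.comp A - A.comp Ψ with hThdef
  set Qs : H →L[ℂ] H := ∑ y ∈ Sf, P y with hQsdef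
  set Qs' : H' →L[ℂ] H' := ∑ y' ∈ Sf', P' y' with hQs'def
  set C : H →L[ℂ] H' := Qs'.comp (Th.comp Qs) with hCdef
  refine ⟨C, ?_, ?_⟩
  · -- compactness of `C`
    have hQcomp : ∀ S : Finset D, IsCompactOperator ⇑(∑ y ∈ S, P y) := by
      intro S
      induction S using Finset.cons_induction with
      | empty =>
        rw [Finset.sum_empty]
        exact isCompactOperator_zero
      | cons y S hyS ih =>
        rw [Finset.sum_cons]
        have h1 : IsCompactOperator ⇑(P y) :=
          isCompactOperator_of_finiteDimensional_range (P y) (hfin y)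
        have h2 := h1.add ih
        rwa [← ContinuousLinearMap.coe_add'] at h2
    have h1 : IsCompactOperator ⇑Qs := hQcomp Sf
    exact h1.continuous_comp (Qs'.comp Th).continuous
  · -- norm estimate `‖T - C‖ ≤ ε`
    -- Step 1: comparison of `T` with the truncated commutator `Th`
    have hdiff : ∀ u : H, ‖(Φ - Ψ) u‖ ≤ 2 * ε₁ * ‖u‖ := by
      intro u
      refine norm_le_of_rows hP _ (by positivity) fun S => ?_
      have hterm : ∀ y ∈ S, ‖P y ((Φ - Ψ) u)‖ ^ 2 ≤ (2 * ε₁) ^ 2 * ‖P y u‖ ^ 2 := by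
        intro y _
        have heq : P y ((Φ - Ψ) u) = (f y.1.2.1 - k y.1.2.1) • P y u := by
          rw [ContinuousLinearMap.sub_apply, map_sub, hΦrow, hΨrow, ← sub_smul]
        rw [heq, norm_smul, mul_pow]
        refine mul_le_mul_of_nonneg_right ?_ (sq_nonneg _)
        have h1 := hfk y.1.2.1
        nlinarith [norm_nonneg (f y.1.2.1 - k y.1.2.1)]
      calc ∑ y ∈ S, ‖P y ((Φ - Ψ) u)‖ ^ 2
          ≤ ∑ y ∈ S, (2 * ε₁) ^ 2 * ‖P y u‖ ^ 2 := Finset.sum_le_sum hterm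
      _ = (2 * ε₁) ^ 2 * ∑ y ∈ S, ‖P y u‖ ^ 2 := by rw [Finset.mul_sum]
      _ ≤ (2 * ε₁) ^ 2 * ‖u‖ ^ 2 :=
          mul_le_mul_of_nonneg_left (bessel hP S u) (sq_nonneg _)
      _ = (2 * ε₁ * ‖u‖) ^ 2 := by ring
    have hdiff' : ∀ u : H', ‖(Φ' - Ψ') u‖ ≤ 2 * ε₁ * ‖u‖ := by
      intro u
      refine norm_le_of_rows hP' _ (by positivity) fun S => ?_
      have hterm : ∀ y' ∈ S, ‖P' y' ((Φ' - Ψ') u)‖ ^ 2 ≤ (2 * ε₁) ^ 2 * ‖P' y' u‖ ^ 2 := by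
        intro y' _
        have heq : P' y' ((Φ' - Ψ') u) = (f y'.1.2.1 - k y'.1.2.1) • P' y' u := by
          rw [ContinuousLinearMap.sub_apply, map_sub, hΦ'row, hΨ'row, ← sub_smul]
        rw [heq, norm_smul, mul_pow]
        refine mul_le_mul_of_nonneg_right ?_ (sq_nonneg _)
        have h1 := hfk y'.1.2.1
        nlinarith [norm_nonneg (f y'.1.2.1 - k y'.1.2.1)]
      calc ∑ y' ∈ S, ‖P' y' ((Φ' - Ψ') u)‖ ^ 2
          ≤ ∑ y' ∈ S, (2 * ε₁) ^ 2 * ‖P' y' u‖ ^ 2 := Finset.sum_le_sum hterm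
      _ = (2 * ε₁) ^ 2 * ∑ y' ∈ S, ‖P' y' u‖ ^ 2 := by rw [Finset.mul_sum]
      _ ≤ (2 * ε₁) ^ 2 * ‖u‖ ^ 2 :=
          mul_le_mul_of_nonneg_left (bessel hP' S u) (sq_nonneg _)
      _ = (2 * ε₁ * ‖u‖) ^ 2 := by ring
    have hpart1 : ∀ v : H, ‖(T - Th) v‖ ≤ ε / 2 * ‖v‖ := by
      intro v
      have heq : (T - Th) v = (Φ' - Ψ') (A v) - A ((Φ - Ψ) v) := by
        simp only [hTdef, hThdef, ContinuousLinearMap.sub_apply,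
          ContinuousLinearMap.comp_apply, map_sub]
        abel
      rw [heq]
      have h1 : ‖A v‖ ≤ a * ‖v‖ := A.le_opNorm v
      have h2 : ‖A ((Φ - Ψ) v)‖ ≤ a * (2 * ε₁ * ‖v‖) :=
        le_trans (A.le_opNorm _) (mul_le_mul_of_nonneg_left (hdiff v) ha)
      have h3 : ‖(Φ' - Ψ') (A v)‖ ≤ 2 * ε₁ * (a * ‖v‖) :=
        le_trans (hdiff' (A v)) (by nlinarith [hε₁, norm_nonneg v])
      calc ‖(Φ' - Ψ') (A v) - A ((Φ - Ψ) v)‖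
          ≤ ‖(Φ' - Ψ') (A v)‖ + ‖A ((Φ - Ψ) v)‖ := norm_sub_le _ _
      _ ≤ 2 * ε₁ * (a * ‖v‖) + a * (2 * ε₁ * ‖v‖) := add_le_add h3 h2
      _ = 4 * ε₁ * a * ‖v‖ := by ring
      _ ≤ ε / 2 * ‖v‖ := by
          refine mul_le_mul_of_nonneg_right ?_ (norm_nonneg v)
          rw [hε₁def]
          have h1 : 4 * (ε / (8 * (a + 1))) * a = ε * a / (2 * (a + 1)) := by
            field_simp; ring
          rw [h1, div_le_div_iff₀ (by positivity) (by norm_num : (0:ℝ) < 2)]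
          nlinarith [hε.le, ha]
    -- Step 2: the banded estimate for `Th - C`
    -- block coefficients
    set Rc : D → D' → Prop := fun y y' =>
      |(y.1.1 : ℝ) - (y'.1.1 : ℝ)| ≤ (m : ℝ) ∧ dist y.1.2.1 y'.1.2.1 ≤ (m : ℝ) ∧
      max (y.1.1 : ℝ) (y'.1.1 : ℝ) * dist y.1.2.1 y'.1.2.1 ≤ (m : ℝ) ∧
      y.1.2.2⁻¹ * y'.1.2.2 ∈ F with hRcdef
    set cc : D' → D → ℂ := fun y' y =>
      if y ∈ Sf ∧ y' ∈ Sf' then 0 else k y'.1.2.1 - k y.1.2.1 with hccdef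
    set good : D' → D → Prop := fun y' y => cc y' y ≠ 0 ∧ Rc y y' with hgooddef
    -- the partial-sum projections acting on single blocks
    have hQsP : ∀ (y : D) (v : H), Qs (P y v) = if y ∈ Sf then P y v else 0 := by
      intro y v
      rw [hQsdef, ContinuousLinearMap.sum_apply]
      by_cases hy : y ∈ Sf
      · rw [Finset.sum_eq_single y (fun z _ hne => PP_ne hP hne v) (fun h => absurd hy h),
          if_pos hy]
        exact PP_same hP y v
      · rw [if_neg hy]
        exact Finset.sum_eq_zero fun z hz => PP_ne hP (by rintro rfl; exact hy hz) v
    have hP'Qs' : ∀ (y' : D') (u : H'), P' y' (Qs' u) = if y' ∈ Sf' then P' y' u else 0 := by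
      intro y' u
      rw [hQs'def, ContinuousLinearMap.sum_apply, map_sum]
      by_cases hy' : y' ∈ Sf'
      · rw [Finset.sum_eq_single y' (fun z _ hne => PP_ne hP' (Ne.symm hne) u)
          (fun h => absurd hy' h), if_pos hy']
        exact PP_same hP' y' u
      · rw [if_neg hy']
        exact Finset.sum_eq_zero fun z hz => PP_ne hP' (by rintro rfl; exact hy' hz) u
    -- the block formula for `Th - C`
    have hblock : ∀ (y' : D') (y : D) (v : H),
        P' y' ((Th - C) (P y v)) = cc y' y • (P' y' (A (P y v))) := by
      intro y' y v
      have h1 : Th (P y v) = Ψ' (A (P y v)) - k y.1.2.1 • A (P y v) := by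
        rw [hThdef]
        simp only [ContinuousLinearMap.sub_apply, ContinuousLinearMap.comp_apply]
        rw [hΨcol y v, map_smul]
      have h2 : P' y' (Th (P y v)) = (k y'.1.2.1 - k y.1.2.1) • P' y' (A (P y v)) := by
        rw [h1, map_sub, hΨ'row, map_smul, sub_smul]
      have h3 : P' y' (C (P y v)) =
          if y ∈ Sf ∧ y' ∈ Sf' then (k y'.1.2.1 - k y.1.2.1) • P' y' (A (P y v)) else 0 := by
        rw [hCdef]
        simp only [ContinuousLinearMap.comp_apply]
        rw [hQsP y v]
        by_cases hy : y ∈ Sf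
        · rw [if_pos hy, hP'Qs']
          by_cases hy' : y' ∈ Sf'
          · rw [if_pos hy', if_pos ⟨hy, hy'⟩, h2]
          · rw [if_neg hy', if_neg (fun hc => hy' hc.2)]
        · rw [if_neg hy]
          simp only [map_zero]
          rw [if_neg (fun hc => hy hc.1)]
      rw [ContinuousLinearMap.sub_apply, map_sub, h2, h3]
      simp only [hccdef]
      by_cases hc : y ∈ Sf ∧ y' ∈ Sf'
      · rw [if_pos hc, if_pos hc, zero_smul, sub_self]
      · rw [if_neg hc, if_neg hc, sub_zero]
    -- G2 : good blocks are localized in `B`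
    have hG2 : ∀ (y' : D') (y : D), good y' y → y.1.2.1 ∈ B ∧ y'.1.2.1 ∈ B := by
      intro y' y hg
      obtain ⟨hcc, hR⟩ := hg
      have hkk : k y'.1.2.1 ≠ k y.1.2.1 := by
        intro he
        apply hcc
        simp only [hccdef]
        split
        · rfl
        · rw [he, sub_self]
      have hd : dist y.1.2.1 y'.1.2.1 ≤ (m : ℝ) := hR.2.1
      by_cases h1 : k y.1.2.1 = 0
      · have h2 : k y'.1.2.1 ≠ 0 := fun h => hkk (by rw [h, h1])
        have hy'K : y'.1.2.1 ∈ K₁ := hsupp _ h2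
        exact ⟨Metric.mem_cthickening_of_dist_le _ _ _ _ hy'K hd, hK₁B hy'K⟩
      · have hyK : y.1.2.1 ∈ K₁ := hsupp _ h1
        exact ⟨hK₁B hyK,
          Metric.mem_cthickening_of_dist_le _ _ _ _ hyK (by rw [dist_comm]; exact hd)⟩
    -- G1 : good blocks are small
    have hG1 : ∀ (y' : D') (y : D), good y' y → ‖cc y' y‖ < ε₂ := by
      intro y' y hg
      obtain ⟨hxB, hx'B⟩ := hG2 y' y hg
      obtain ⟨hcc, hR⟩ := hg
      have hkept : ¬(y ∈ Sf ∧ y' ∈ Sf') := by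
        intro hc; apply hcc; simp only [hccdef]; rw [if_pos hc]
      have hccval : cc y' y = k y'.1.2.1 - k y.1.2.1 := by
        simp only [hccdef]; rw [if_neg hkept]
      have hnm : (n : ℝ) ≤ ((n + m : ℕ) : ℝ) := by
        push_cast
        linarith [Nat.cast_nonneg (α := ℝ) m]
      have hmax : (n : ℝ) < max (y.1.1 : ℝ) (y'.1.1 : ℝ) := by
        by_contra hle
        push_neg at hle
        refine hkept ⟨?_, ?_⟩
        · rw [hSfmem]
          exact ⟨le_trans (le_trans (le_max_left _ _) hle) hnm, hxB⟩
        · rw [hSf'mem]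
          exact ⟨le_trans (le_trans (le_max_right _ _) hle) hnm, hx'B⟩
      have hmax0 : (0 : ℝ) < max (y.1.1 : ℝ) (y'.1.1 : ℝ) := lt_trans hn0 hmax
      have hdist : dist y.1.2.1 y'.1.2.1 < δ := by
        have h1 : max (y.1.1 : ℝ) (y'.1.1 : ℝ) * dist y.1.2.1 y'.1.2.1 ≤ m := hR.2.2.1
        have h2 : dist y.1.2.1 y'.1.2.1 ≤ (m : ℝ) / max (y.1.1 : ℝ) (y'.1.1 : ℝ) := by
          rw [le_div_iff₀ hmax0]
          calc dist y.1.2.1 y'.1.2.1 * max (y.1.1 : ℝ) (y'.1.1 : ℝ)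
              = max (y.1.1 : ℝ) (y'.1.1 : ℝ) * dist y.1.2.1 y'.1.2.1 := mul_comm _ _
          _ ≤ m := h1
        calc dist y.1.2.1 y'.1.2.1 ≤ (m : ℝ) / max (y.1.1 : ℝ) (y'.1.1 : ℝ) := h2
        _ ≤ (m : ℝ) / n := by
            exact div_le_div_of_nonneg_left (Nat.cast_nonneg m) hn0 hmax.le
        _ < δ := hmn
      have hkd : dist (k y.1.2.1) (k y'.1.2.1) < ε₂ := hδ hdist
      rw [hccval]
      calc ‖k y'.1.2.1 - k y.1.2.1‖ = dist (k y'.1.2.1) (k y.1.2.1) := (dist_eq_norm _ _).symm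
      _ = dist (k y.1.2.1) (k y'.1.2.1) := dist_comm _ _
      _ < ε₂ := hkd
    -- G3 : rows meet at most `N` good blocks
    have hG3 : ∀ (y' : D') (S₁ : Finset D), (S₁.filter (fun y => good y' y)).card ≤ N := by
      intro y' S₁
      obtain ⟨hZfin, hZcard⟩ := hN y'.1.1 y'.1.2.1 y'.1.2.2
      have hmap : ∀ y : D, y ∈ S₁.filter (fun y => good y' y) → (y : ℝ≥0 × X × G) ∈
          {z : ℝ≥0 × X × G | z ∈ D ∪ D' ∧ z.2.1 ∈ B ∧
            |(z.1 : ℝ) - (y'.1.1 : ℝ)| ≤ (m : ℝ) ∧ dist z.2.1 y'.1.2.1 ≤ (m : ℝ) ∧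
            max (y'.1.1 : ℝ) (z.1 : ℝ) * dist z.2.1 y'.1.2.1 ≤ (m : ℝ) ∧
            y'.1.2.2⁻¹ * z.2.2 ∈ Fh} := by
        intro y hy
        rw [Finset.mem_filter] at hy
        obtain ⟨-, hg⟩ := hy
        obtain ⟨hxB, -⟩ := hG2 y' y hg
        obtain ⟨-, hR⟩ := hg
        refine ⟨Or.inl y.2, hxB, ?_, hR.2.1, ?_, ?_⟩
        · exact hR.1
        · rw [max_comm]; exact hR.2.2.1
        · rw [hFhdef, Finset.mem_union]
          right
          rw [Finset.mem_image]
          exact ⟨y.1.2.2⁻¹ * y'.1.2.2, hR.2.2.2, by rw [mul_inv_rev, inv_inv]⟩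
      calc (S₁.filter (fun y => good y' y)).card
          = ((S₁.filter (fun y => good y' y)).image (Subtype.val)).card :=
            (Finset.card_image_of_injective _ Subtype.val_injective).symm
      _ ≤ N := by
          have hsub : ↑(((S₁.filter (fun y => good y' y))).image (Subtype.val)) ⊆
              {z : ℝ≥0 × X × G | z ∈ D ∪ D' ∧ z.2.1 ∈ B ∧
                |(z.1 : ℝ) - (y'.1.1 : ℝ)| ≤ (m : ℝ) ∧ dist z.2.1 y'.1.2.1 ≤ (m : ℝ) ∧
                max (y'.1.1 : ℝ) (z.1 : ℝ) * dist z.2.1 y'.1.2.1 ≤ (m : ℝ) ∧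
                y'.1.2.2⁻¹ * z.2.2 ∈ Fh} := by
            intro z hz
            rw [Finset.coe_image, Set.mem_image] at hz
            obtain ⟨y, hy, rfl⟩ := hz
            exact hmap y (by exact_mod_cast hy)
          calc (((S₁.filter (fun y => good y' y))).image (Subtype.val)).card
              = (↑(((S₁.filter (fun y => good y' y))).image (Subtype.val)) : Set _).ncard :=
                (Set.ncard_coe_finset _).symm
          _ ≤ _ := Set.ncard_le_ncard hsub hZfin
          _ ≤ N := hZcard
    -- G4 : columns meet at most `N` good blocks
    have hG4 : ∀ (y : D) (S'₀ : Finset D'), (S'₀.filter (fun y' => good y' y)).card ≤ N := by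
      intro y S'₀
      obtain ⟨hZfin, hZcard⟩ := hN y.1.1 y.1.2.1 y.1.2.2
      have hmap : ∀ y' : D', y' ∈ S'₀.filter (fun y' => good y' y) → (y' : ℝ≥0 × X × G) ∈
          {z : ℝ≥0 × X × G | z ∈ D ∪ D' ∧ z.2.1 ∈ B ∧
            |(z.1 : ℝ) - (y.1.1 : ℝ)| ≤ (m : ℝ) ∧ dist z.2.1 y.1.2.1 ≤ (m : ℝ) ∧
            max (y.1.1 : ℝ) (z.1 : ℝ) * dist z.2.1 y.1.2.1 ≤ (m : ℝ) ∧
            y.1.2.2⁻¹ * z.2.2 ∈ Fh} := by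
        intro y' hy'
        rw [Finset.mem_filter] at hy'
        obtain ⟨-, hg⟩ := hy'
        obtain ⟨-, hx'B⟩ := hG2 y' y hg
        obtain ⟨-, hR⟩ := hg
        refine ⟨Or.inr y'.2, hx'B, ?_, ?_, ?_, ?_⟩
        · rw [abs_sub_comm]; exact hR.1
        · rw [dist_comm]; exact hR.2.1
        · rw [dist_comm]; exact hR.2.2.1
        · rw [hFhdef, Finset.mem_union]
          left
          exact hR.2.2.2
      calc (S'₀.filter (fun y' => good y' y)).card
          = ((S'₀.filter (fun y' => good y' y)).image (Subtype.val)).card :=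
            (Finset.card_image_of_injective _ Subtype.val_injective).symm
      _ ≤ N := by
          have hsub : ↑(((S'₀.filter (fun y' => good y' y))).image (Subtype.val)) ⊆
              {z : ℝ≥0 × X × G | z ∈ D ∪ D' ∧ z.2.1 ∈ B ∧
                |(z.1 : ℝ) - (y.1.1 : ℝ)| ≤ (m : ℝ) ∧ dist z.2.1 y.1.2.1 ≤ (m : ℝ) ∧
                max (y.1.1 : ℝ) (z.1 : ℝ) * dist z.2.1 y.1.2.1 ≤ (m : ℝ) ∧
                y.1.2.2⁻¹ * z.2.2 ∈ Fh} := by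
            intro z hz
            rw [Finset.coe_image, Set.mem_image] at hz
            obtain ⟨y', hy', rfl⟩ := hz
            exact hmap y' (by exact_mod_cast hy')
          calc (((S'₀.filter (fun y' => good y' y))).image (Subtype.val)).card
              = (↑(((S'₀.filter (fun y' => good y' y))).image (Subtype.val)) : Set _).ncard :=
                (Set.ncard_coe_finset _).symm
          _ ≤ _ := Set.ncard_le_ncard hsub hZfin
          _ ≤ N := hZcard
    -- the core banded row estimate
    have hcore : ∀ (v : H) (S₁ : Finset D),
        ‖(Th - C) ((∑ y ∈ S₁, P y) v)‖ ≤ ε₂ * N * a * ‖v‖ := by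
      intro v S₁
      refine norm_le_of_rows hP' _ (by positivity) fun S'₀ => ?_
      have hroweq : ∀ y' : D', P' y' ((Th - C) ((∑ y ∈ S₁, P y) v)) =
          ∑ y ∈ S₁.filter (fun y => good y' y), cc y' y • (P' y' (A (P y v))) := by
        intro y'
        rw [ContinuousLinearMap.sum_apply, map_sum, map_sum]
        rw [Finset.sum_congr rfl fun y _ => hblock y' y v]
        symm
        refine Finset.sum_filter_of_ne ?_
        intro y _ hne
        by_contra hng
        apply hne
        by_cases hcc : cc y' y = 0
        · rw [hcc, zero_smul]
        · have hnR : ¬ Rc y y' := fun hR => hng ⟨hcc, hR⟩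
          have hzero : (P' y').comp (A.comp (P y)) = 0 := hAc y y' hnR
          have : P' y' (A (P y v)) = 0 := by
            have := congrArg (fun (S : H →L[ℂ] H') => S v) hzero
            simpa using this
          rw [this, smul_zero]
      have hrowbound : ∀ y' : D', ‖P' y' ((Th - C) ((∑ y ∈ S₁, P y) v))‖ ≤
          ε₂ * a * ∑ y ∈ S₁.filter (fun y => good y' y), ‖P y v‖ := by
        intro y'
        rw [hroweq y']
        calc ‖∑ y ∈ S₁.filter (fun y => good y' y), cc y' y • (P' y' (A (P y v)))‖
            ≤ ∑ y ∈ S₁.filter (fun y => good y' y), ‖cc y' y • (P' y' (A (P y v)))‖ :=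
              norm_sum_le _ _
        _ ≤ ∑ y ∈ S₁.filter (fun y => good y' y), ε₂ * (a * ‖P y v‖) := by
            refine Finset.sum_le_sum fun y hy => ?_
            rw [Finset.mem_filter] at hy
            rw [norm_smul]
            have hc1 : ‖cc y' y‖ ≤ ε₂ := (hG1 y' y hy.2).le
            have hc2 : ‖P' y' (A (P y v))‖ ≤ a * ‖P y v‖ := by
              calc ‖P' y' (A (P y v))‖ ≤ ‖A (P y v)‖ :=
                    contraction (hP'.isSelfAdjoint y') (hP'.idempotent y') _
              _ ≤ a * ‖P y v‖ := A.le_opNorm _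
            exact mul_le_mul hc1 hc2 (norm_nonneg _) hε₂.le
        _ = ε₂ * a * ∑ y ∈ S₁.filter (fun y => good y' y), ‖P y v‖ := by
            rw [Finset.mul_sum]
            exact Finset.sum_congr rfl fun y _ => by ring
      -- square the rows and sum
      have hrowsq : ∀ y' : D', ‖P' y' ((Th - C) ((∑ y ∈ S₁, P y) v))‖ ^ 2 ≤
          ε₂ ^ 2 * a ^ 2 * N * ∑ y ∈ S₁.filter (fun y => good y' y), ‖P y v‖ ^ 2 := by
        intro y'
        have h1 : ‖P' y' ((Th - C) ((∑ y ∈ S₁, P y) v))‖ ^ 2 ≤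
            (ε₂ * a * ∑ y ∈ S₁.filter (fun y => good y' y), ‖P y v‖) ^ 2 := by
          have h0 : (0:ℝ) ≤ ε₂ * a * ∑ y ∈ S₁.filter (fun y => good y' y), ‖P y v‖ := by
            have := Finset.sum_nonneg
              (fun (y : D) (_ : y ∈ S₁.filter (fun y => good y' y)) => norm_nonneg (P y v))
            positivity
          exact pow_le_pow_left₀ (norm_nonneg _) (hrowbound y') 2
        have h2 : (∑ y ∈ S₁.filter (fun y => good y' y), ‖P y v‖) ^ 2 ≤
            ((S₁.filter (fun y => good y' y)).card : ℝ) *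
              ∑ y ∈ S₁.filter (fun y => good y' y), ‖P y v‖ ^ 2 := by
          have := Finset.sum_mul_sq_le_sq_mul_sq (S₁.filter (fun y => good y' y))
            (fun _ => (1:ℝ)) (fun y => ‖P y v‖)
          simpa using this
        have h3 : ((S₁.filter (fun y => good y' y)).card : ℝ) ≤ N := by
          exact_mod_cast hG3 y' S₁
        have h4 : (0:ℝ) ≤ ∑ y ∈ S₁.filter (fun y => good y' y), ‖P y v‖ ^ 2 :=
          Finset.sum_nonneg fun y _ => sq_nonneg _
        calc ‖P' y' ((Th - C) ((∑ y ∈ S₁, P y) v))‖ ^ 2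
            ≤ (ε₂ * a * ∑ y ∈ S₁.filter (fun y => good y' y), ‖P y v‖) ^ 2 := h1
        _ = ε₂ ^ 2 * a ^ 2 * (∑ y ∈ S₁.filter (fun y => good y' y), ‖P y v‖) ^ 2 := by ring
        _ ≤ ε₂ ^ 2 * a ^ 2 * (((S₁.filter (fun y => good y' y)).card : ℝ) *
              ∑ y ∈ S₁.filter (fun y => good y' y), ‖P y v‖ ^ 2) :=
            mul_le_mul_of_nonneg_left h2 (by positivity)
        _ ≤ ε₂ ^ 2 * a ^ 2 * ((N : ℝ) *
              ∑ y ∈ S₁.filter (fun y => good y' y), ‖P y v‖ ^ 2) := by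
            refine mul_le_mul_of_nonneg_left ?_ (by positivity)
            exact mul_le_mul_of_nonneg_right h3 h4
        _ = ε₂ ^ 2 * a ^ 2 * N * ∑ y ∈ S₁.filter (fun y => good y' y), ‖P y v‖ ^ 2 := by ring
      -- swap the double sum
      have hswap : ∑ y' ∈ S'₀, ∑ y ∈ S₁.filter (fun y => good y' y), ‖P y v‖ ^ 2
          = ∑ y ∈ S₁, ((S'₀.filter (fun y' => good y' y)).card : ℝ) * ‖P y v‖ ^ 2 := by
        have h1 : ∀ y' ∈ S'₀, ∑ y ∈ S₁.filter (fun y => good y' y), ‖P y v‖ ^ 2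
            = ∑ y ∈ S₁, if good y' y then ‖P y v‖ ^ 2 else 0 := fun y' _ =>
          Finset.sum_filter _ _
        rw [Finset.sum_congr rfl h1, Finset.sum_comm]
        refine Finset.sum_congr rfl fun y _ => ?_
        rw [← Finset.sum_filter, Finset.sum_const, nsmul_eq_mul]
      have hdouble : ∑ y' ∈ S'₀, ∑ y ∈ S₁.filter (fun y => good y' y), ‖P y v‖ ^ 2
          ≤ (N : ℝ) * ‖v‖ ^ 2 := by
        rw [hswap]
        calc ∑ y ∈ S₁, ((S'₀.filter (fun y' => good y' y)).card : ℝ) * ‖P y v‖ ^ 2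
            ≤ ∑ y ∈ S₁, (N : ℝ) * ‖P y v‖ ^ 2 := by
              refine Finset.sum_le_sum fun y _ => ?_
              refine mul_le_mul_of_nonneg_right ?_ (sq_nonneg _)
              exact_mod_cast hG4 y S'₀
        _ = (N : ℝ) * ∑ y ∈ S₁, ‖P y v‖ ^ 2 := by rw [Finset.mul_sum]
        _ ≤ (N : ℝ) * ‖v‖ ^ 2 :=
            mul_le_mul_of_nonneg_left (bessel hP S₁ v) (Nat.cast_nonneg N)
      calc ∑ y' ∈ S'₀, ‖P' y' ((Th - C) ((∑ y ∈ S₁, P y) v))‖ ^ 2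
          ≤ ∑ y' ∈ S'₀, ε₂ ^ 2 * a ^ 2 * N *
              ∑ y ∈ S₁.filter (fun y => good y' y), ‖P y v‖ ^ 2 :=
            Finset.sum_le_sum fun y' _ => hrowsq y'
      _ = ε₂ ^ 2 * a ^ 2 * N *
            ∑ y' ∈ S'₀, ∑ y ∈ S₁.filter (fun y => good y' y), ‖P y v‖ ^ 2 := by
          rw [Finset.mul_sum]
      _ ≤ ε₂ ^ 2 * a ^ 2 * N * ((N : ℝ) * ‖v‖ ^ 2) :=
          mul_le_mul_of_nonneg_left hdouble (by positivity)
      _ = (ε₂ * N * a * ‖v‖) ^ 2 := by ring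
    -- pass to the limit along the net of finite truncations
    have hpart2 : ∀ v : H, ‖(Th - C) v‖ ≤ ε₂ * N * a * ‖v‖ := by
      intro v
      refine le_of_forall_pos_le_add fun η hη => ?_
      have hpos : (0:ℝ) < η / (‖Th - C‖ + 1) := by positivity
      obtain ⟨S₀, hS₀⟩ := approx hP v hpos
      have h1 := hS₀ S₀ (Finset.Subset.refl _)
      have h2 : ‖(Th - C) v - (Th - C) ((∑ y ∈ S₀, P y) v)‖ ≤ η := by
        rw [← map_sub]
        calc ‖(Th - C) (v - (∑ y ∈ S₀, P y) v)‖
            ≤ ‖Th - C‖ * ‖v - (∑ y ∈ S₀, P y) v‖ := (Th - C).le_opNorm _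
        _ ≤ ‖Th - C‖ * (η / (‖Th - C‖ + 1)) :=
            mul_le_mul_of_nonneg_left h1 (norm_nonneg _)
        _ ≤ η := by
            have hp : (0:ℝ) < ‖Th - C‖ + 1 := by positivity
            rw [mul_div_assoc', div_le_iff₀ hp]
            nlinarith [norm_nonneg (Th - C), hη.le]
      calc ‖(Th - C) v‖
          ≤ ‖(Th - C) ((∑ y ∈ S₀, P y) v)‖ + ‖(Th - C) v - (Th - C) ((∑ y ∈ S₀, P y) v)‖ := by
            have := norm_add_le ((Th - C) ((∑ y ∈ S₀, P y) v))
              ((Th - C) v - (Th - C) ((∑ y ∈ S₀, P y) v))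
            simpa using this
      _ ≤ ε₂ * N * a * ‖v‖ + η := add_le_add (hcore v S₀) h2
    -- final assembly
    have heps2 : ε₂ * N * a ≤ ε / 2 := by
      rw [hε₂def]
      have h1 : ε / (2 * (N + 1) * (a + 1)) * N * a
          = ε * (N * a) / (2 * ((N + 1) * (a + 1))) := by
        field_simp
      rw [h1, div_le_div_iff₀ (by positivity) (by norm_num : (0:ℝ) < 2)]
      nlinarith [hε.le, ha, Nat.cast_nonneg (α := ℝ) N]
    refine ContinuousLinearMap.opNorm_le_bound _ hε.le fun v => ?_
    have hTC : (T - C) v = (T - Th) v + (Th - C) v := by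
      simp only [ContinuousLinearMap.sub_apply]
      abel
    rw [hTC]
    calc ‖(T - Th) v + (Th - C) v‖ ≤ ‖(T - Th) v‖ + ‖(Th - C) v‖ := norm_add_le _ _
    _ ≤ ε / 2 * ‖v‖ + ε₂ * N * a * ‖v‖ := add_le_add (hpart1 v) (hpart2 v)
    _ ≤ ε / 2 * ‖v‖ + ε / 2 * ‖v‖ :=
        add_le_add le_rfl (mul_le_mul_of_nonneg_right heps2 (norm_nonneg v))
    _ = ε * ‖v‖ := by ring
end

section
/- Let G be a group and X a locally compact Hausdorff topological space with a G-action by homeomorphisms. Let D and D' be subsets of [0,∞) × X × G; for a point y = (s,x,g) write s_y := s, x_y := x, g_y := g. Let H and H' be complex Hilbert spaces with orthogonal decompositions (H_y)_{y∈D} and (H'_{y'})_{y'∈D'}, with orthogonal projections P_y and P'_{y'}. Assume: (a) every H_y and every H'_{y'} is finite dimensional; and (b) for every n ∈ ℕ and every compact subset B of X the sets {y ∈ D : s_y ≤ n and x_y ∈ B} and {y' ∈ D' : s_{y'} ≤ n and x_{y'} ∈ B} are finite. For a bounded continuous function f : X → ℂ let Φ(f) and Φ'(f) denote the unique bounded diagonal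 operators with Φ(f)v = f(x_y)·v for v ∈ H_y and Φ'(f)w = f(x_{y'})·w for w ∈ H'_{y'}. Let A : H → H' be a bounded operator such that for some n ∈ ℕ one has P'_{y'} ∘ A ∘ P_y = 0 unless s_y ≤ n and s_{y'} ≤ n. Then for every continuous function f : X → ℂ vanishing at infinity, both Φ'(f) ∘ A and A ∘ Φ(f) are compact operators. -/
open scoped NNReal

section Aux

variable {I : Type*} {E F : Type*} [NormedAddCommGroup E] [InnerProductSpace ℂ E]
  [CompleteSpace E] [NormedAddCommGroup F] [NormedSpace ℂ F]
  {P : I → (E →L[ℂ] E)}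

lemma od_inner_left (hP : OrthogonalDecomposition P) (i : I) (x y : E) :
    (inner ℂ ((P i) x) y : ℂ) = inner ℂ x ((P i) y) := by
  conv_lhs => rw [← hP.isSelfAdjoint i]
  rw [ContinuousLinearMap.star_eq_adjoint, ContinuousLinearMap.adjoint_inner_left]

lemma od_proj_range (hP : OrthogonalDecomposition P) {i : I} {v : E}
    (hv : v ∈ LinearMap.range (P i : E →ₗ[ℂ] E)) : P i v = v := by
  obtain ⟨w, rfl⟩ := hv
  change P i (P i w) = P i w; rw [← ContinuousLinearMap.comp_apply, hP.idempotent]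

lemma od_eq_zero (hP : OrthogonalDecomposition P) (w : E)
    (hw : ∀ i, P i w = 0) : w = 0 := by
  have key : ∀ x ∈ (⨆ i, LinearMap.range (P i : E →ₗ[ℂ] E) : Submodule ℂ E), (inner ℂ x w : ℂ) = 0 := by
    intro x hx
    refine Submodule.iSup_induction (motive := fun z => (inner ℂ z w : ℂ) = 0) _ hx (fun i x hxi => ?_)
      (by simp) (fun a b ha hb => by show (inner ℂ (a+b) w : ℂ) = 0; rw [inner_add_left, ha, hb, add_zero])
    obtain ⟨v, rfl⟩ := hxi
    change inner ℂ (P i v) w = 0; rw [od_inner_left hP, hw, inner_zero_right]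
  have hcl : IsClosed {x : E | (inner ℂ x w : ℂ) = 0} :=
    isClosed_eq (Continuous.inner continuous_id continuous_const) continuous_const
  have hsub : closure ((⨆ i, LinearMap.range (P i : E →ₗ[ℂ] E) : Submodule ℂ E) : Set E)
      ⊆ {x : E | (inner ℂ x w : ℂ) = 0} := closure_minimal key hcl
  have hww : (inner ℂ w w : ℂ) = 0 := hsub (by rw [hP.denseSpan.closure_eq]; trivial)
  exact inner_self_eq_zero.mp hww

lemma od_vanish (hP : OrthogonalDecomposition P) (C : E →L[ℂ] F)
    (hC : ∀ i, C.comp (P i) = 0) : C = 0 := by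
  ext v
  have key : ∀ x ∈ (⨆ i, LinearMap.range (P i : E →ₗ[ℂ] E) : Submodule ℂ E), C x = 0 := by
    intro x hx
    refine Submodule.iSup_induction (motive := fun z => C z = 0) _ hx (fun i x hxi => ?_)
      (by simp) (fun a b ha hb => by show C (a+b) = 0; rw [map_add, ha, hb, add_zero])
    obtain ⟨v, rfl⟩ := hxi
    change C (P i v) = 0; rw [← ContinuousLinearMap.comp_apply, hC]
    rfl
  have hcl : IsClosed {x : E | C x = 0} := isClosed_eq C.continuous continuous_const
  have hsub : closure ((⨆ i, LinearMap.range (P i : E →ₗ[ℂ] E) : Submodule ℂ E) : Set E)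
      ⊆ {x : E | C x = 0} := closure_minimal key hcl
  exact hsub (by rw [hP.denseSpan.closure_eq]; trivial)

lemma od_proj_partial_zero (hP : OrthogonalDecomposition P) (S : Set I) {i : I} (hi : i ∉ S)
    {x : E} (hx : x ∈ (⨆ j : S, LinearMap.range (P j.1 : E →ₗ[ℂ] E)).topologicalClosure) : P i x = 0 := by
  have key : ∀ x ∈ (⨆ j : S, LinearMap.range (P j.1 : E →ₗ[ℂ] E) : Submodule ℂ E), P i x = 0 := by
    intro x hx
    refine Submodule.iSup_induction (motive := fun z => P i z = 0) _ hx (fun j x hxj => ?_)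
      (by simp) (fun a b ha hb => by show P i (a+b) = 0; rw [map_add, ha, hb, add_zero])
    obtain ⟨v, rfl⟩ := hxj
    change P i (P j.1 v) = 0; rw [← ContinuousLinearMap.comp_apply, hP.orthogonal i j.1 (fun h => hi (h ▸ j.2))]
    rfl
  have hcl : IsClosed {x : E | P i x = 0} := isClosed_eq (P i).continuous continuous_const
  have hsub : closure ((⨆ j : S, LinearMap.range (P j.1 : E →ₗ[ℂ] E) : Submodule ℂ E) : Set E)
      ⊆ {x : E | P i x = 0} := closure_minimal key hcl
  rw [← Submodule.topologicalClosure_coe] at hsub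
  exact hsub hx

lemma od_mem_closure (hP : OrthogonalDecomposition P) (S : Set I) (u : E)
    (hu : ∀ i ∉ S, P i u = 0) :
    u ∈ (⨆ j : S, LinearMap.range (P j.1 : E →ₗ[ℂ] E)).topologicalClosure := by
  set K := (⨆ j : S, LinearMap.range (P j.1 : E →ₗ[ℂ] E)).topologicalClosure with hK
  haveI : CompleteSpace K := by
    rw [hK]; exact (Submodule.isClosed_topologicalClosure _).completeSpace_coe
  set u₂ : E := u - K.orthogonalProjectionOnto u with hu₂
  have hmem : (K.orthogonalProjectionOnto u : E) ∈ K := SetLike.coe_mem _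
  have horth : u₂ ∈ Kᗮ := Submodule.sub_starProjection_mem_orthogonal (K := K) u
  have hz : u₂ = 0 := by
    apply od_eq_zero hP
    intro i
    by_cases hiS : i ∈ S
    · have h1 : (inner ℂ (P i u₂) (P i u₂) : ℂ) = inner ℂ u₂ (P i (P i u₂)) := od_inner_left hP i u₂ _
      have h2 : P i (P i u₂) ∈ K := by
        apply Submodule.le_topologicalClosure
        exact Submodule.mem_iSup_of_mem (⟨i, hiS⟩ : S) ⟨P i u₂, rfl⟩
      have h3 : (inner ℂ u₂ (P i (P i u₂)) : ℂ) = 0 := by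
        have := (Submodule.mem_orthogonal K u₂).mp horth _ h2
        rw [← inner_conj_symm, this, map_zero]
      exact inner_self_eq_zero.mp (h1.trans h3)
    · rw [hu₂, map_sub, hu i hiS, od_proj_partial_zero hP S hiS hmem, sub_zero]
  exact (sub_eq_zero.mp hz) ▸ hmem

end Aux

section Aux2

variable {I : Type*} {E F : Type*} [NormedAddCommGroup E] [InnerProductSpace ℂ E]
  [CompleteSpace E] [NormedAddCommGroup F] [NormedSpace ℂ F]
  {P : I → (E →L[ℂ] E)}

lemma od_pyth (hP : OrthogonalDecomposition P) {ι : Type*} (t : Finset ι) (g : ι → E)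
    (ind : ι → I) (hinj : Set.InjOn ind t)
    (hg : ∀ i ∈ t, P (ind i) (g i) = g i) :
    ‖∑ i ∈ t, g i‖ ^ 2 = ∑ i ∈ t, ‖g i‖ ^ 2 := by
  have horth : ∀ i ∈ t, ∀ j ∈ t, i ≠ j → (inner ℂ (g i) (g j) : ℂ) = 0 := by
    intro i hi j hj hij
    have hne : ind i ≠ ind j := fun h => hij (hinj hi hj h)
    rw [← hg i hi, ← hg j hj, od_inner_left hP, ← ContinuousLinearMap.comp_apply,
      hP.orthogonal _ _ hne, ContinuousLinearMap.zero_apply, inner_zero_right]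
  have key : (inner ℂ (∑ i ∈ t, g i) (∑ i ∈ t, g i) : ℂ) = ∑ i ∈ t, ((‖g i‖ : ℂ)) ^ 2 := by
    rw [sum_inner]
    refine Finset.sum_congr rfl fun i hi => ?_
    rw [inner_sum, Finset.sum_eq_single_of_mem i hi
      (fun j hj hji => horth i hi j hj (Ne.symm hji)), inner_self_eq_norm_sq_to_K]
    norm_cast
  rw [inner_self_eq_norm_sq_to_K] at key
  exact Complex.ofReal_injective (by push_cast; exact key)

lemma od_bound (hP : OrthogonalDecomposition P) (S : Set I) (B A₀ : E →L[ℂ] F) (c : I → ℂ)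
    (ε : ℝ) (hε : 0 ≤ ε) (hc : ∀ i ∈ S, ‖c i‖ ≤ ε)
    (hB : ∀ i ∈ S, ∀ v : E, P i v = v → B v = c i • A₀ v)
    (u : E) (hu : ∀ i ∉ S, P i u = 0) : ‖B u‖ ≤ ε * ‖A₀‖ * ‖u‖ := by
  have hmem := od_mem_closure hP S u hu
  have hbound : ∀ x ∈ (⨆ j : S, LinearMap.range (P j.1 : E →ₗ[ℂ] E) : Submodule ℂ E),
      ‖B x‖ ≤ ε * ‖A₀‖ * ‖x‖ := by
    intro x hx
    rw [Submodule.mem_iSup_iff_exists_finsupp] at hx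
    obtain ⟨d, hd, rfl⟩ := hx
    classical
    rw [Finsupp.sum]
    have hdP : ∀ i : S, P i.1 (d i) = d i := fun i => od_proj_range hP (hd i)
    have hBx : B (∑ i ∈ d.support, d i) = A₀ (∑ i ∈ d.support, c i.1 • d i) := by
      rw [map_sum, map_sum]
      refine Finset.sum_congr rfl fun i _ => ?_
      rw [hB i.1 i.2 (d i) (hdP i), map_smul]
    have hx2 : ‖∑ i ∈ d.support, d i‖ ^ 2 = ∑ i ∈ d.support, ‖d i‖ ^ 2 :=
      od_pyth hP _ _ (fun i : S => i.1) (fun a _ b _ h => Subtype.ext h)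
        (fun i _ => hdP i)
    have hw2 : ‖∑ i ∈ d.support, c i.1 • d i‖ ^ 2 = ∑ i ∈ d.support, ‖c i.1 • d i‖ ^ 2 :=
      od_pyth hP _ _ (fun i : S => i.1) (fun a _ b _ h => Subtype.ext h)
        (fun i _ => by rw [map_smul, hdP i])
    have hwx : ‖∑ i ∈ d.support, c i.1 • d i‖ ≤ ε * ‖∑ i ∈ d.support, d i‖ := by
      have h1 : ‖∑ i ∈ d.support, c i.1 • d i‖ ^ 2 ≤ ε ^ 2 * ‖∑ i ∈ d.support, d i‖ ^ 2 := by
        rw [hw2, hx2, Finset.mul_sum]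
        refine Finset.sum_le_sum fun i _ => ?_
        rw [norm_smul, mul_pow]
        have := hc i.1 i.2
        have h0' := norm_nonneg (c i.1)
        have hcc : ‖c i.1‖ ^ 2 ≤ ε ^ 2 := by nlinarith
        exact mul_le_mul_of_nonneg_right hcc (sq_nonneg _)
      have h2 := norm_nonneg (∑ i ∈ d.support, c i.1 • d i)
      have h3 := norm_nonneg (∑ i ∈ d.support, d i)
      calc ‖∑ i ∈ d.support, c i.1 • d i‖
          = Real.sqrt (‖∑ i ∈ d.support, c i.1 • d i‖ ^ 2) := (Real.sqrt_sq h2).symm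
        _ ≤ Real.sqrt ((ε * ‖∑ i ∈ d.support, d i‖) ^ 2) :=
            Real.sqrt_le_sqrt (by nlinarith)
        _ = ε * ‖∑ i ∈ d.support, d i‖ := Real.sqrt_sq (mul_nonneg hε h3)
    rw [hBx]
    calc ‖A₀ (∑ i ∈ d.support, c i.1 • d i)‖ ≤ ‖A₀‖ * ‖∑ i ∈ d.support, c i.1 • d i‖ :=
          A₀.le_opNorm _
      _ ≤ ‖A₀‖ * (ε * ‖∑ i ∈ d.support, d i‖) := by
          exact mul_le_mul_of_nonneg_left hwx (norm_nonneg _)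
      _ = ε * ‖A₀‖ * ‖∑ i ∈ d.support, d i‖ := by ring
  have hcl : IsClosed {x : E | ‖B x‖ ≤ ε * ‖A₀‖ * ‖x‖} :=
    isClosed_le (B.continuous.norm) (continuous_const.mul continuous_norm)
  have hsub : closure ((⨆ j : S, LinearMap.range (P j.1 : E →ₗ[ℂ] E) : Submodule ℂ E) : Set E)
      ⊆ {x : E | ‖B x‖ ≤ ε * ‖A₀‖ * ‖x‖} := closure_minimal hbound hcl
  rw [← Submodule.topologicalClosure_coe] at hsub
  exact hsub hmem

lemma od_Q_comp (hP : OrthogonalDecomposition P) [DecidableEq I] (t : Finset I) (j : I) (w : E) :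
    P j (w - ∑ i ∈ t, P i w) = if j ∈ t then 0 else P j w := by
  rw [map_sub, map_sum]
  by_cases hj : j ∈ t
  · rw [if_pos hj, Finset.sum_eq_single_of_mem j hj (fun i hi hij => by
      rw [← ContinuousLinearMap.comp_apply, hP.orthogonal j i (Ne.symm hij)]; rfl)]
    rw [← ContinuousLinearMap.comp_apply, hP.idempotent, sub_self]
  · rw [if_neg hj, Finset.sum_eq_zero (fun i hi => by
      rw [← ContinuousLinearMap.comp_apply, hP.orthogonal j i (fun h => hj (h ▸ hi))]; rfl),
      sub_zero]

lemma od_Q_norm (hP : OrthogonalDecomposition P) [DecidableEq I] (t : Finset I) (w : E) :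
    ‖w - ∑ i ∈ t, P i w‖ ≤ ‖w‖ := by
  set q := ∑ i ∈ t, P i w with hq
  set r := w - q with hr
  have hor : (inner ℂ r q : ℂ) = 0 := by
    rw [hq, inner_sum]
    refine Finset.sum_eq_zero fun i hi => ?_
    rw [← od_inner_left hP i r w]
    have hPr : P i r = 0 := by
      rw [hr, hq, od_Q_comp hP t i w, if_pos hi]
    rw [hPr, inner_zero_left]
  have hsq : ‖w‖ ^ 2 = ‖r‖ ^ 2 + ‖q‖ ^ 2 := by
    have hw : w = r + q := by rw [hr, sub_add_cancel]
    have hns := norm_add_sq (𝕜 := ℂ) r q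
    rw [hor, map_zero] at hns
    rw [hw] at *
    linarith [hns]
  have h1 := norm_nonneg r
  have h2 := norm_nonneg w
  have h3 := sq_nonneg ‖q‖
  nlinarith

end Aux2

section Aux3

variable {E F : Type*} [NormedAddCommGroup E] [NormedSpace ℂ E]
  [NormedAddCommGroup F] [NormedSpace ℂ F]

lemma compact_of_fin_rank (T : E →L[ℂ] F) (W : Submodule ℂ F) [FiniteDimensional ℂ W]
    (hT : ∀ v, T v ∈ W) : IsCompactOperator ⇑T := by
  refine ⟨Subtype.val '' (Metric.closedBall (0 : W) (‖T‖ + 1)), ?_, ?_⟩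
  · exact (isCompact_closedBall _ _).image continuous_subtype_val
  · have hsub : Metric.ball (0 : E) 1 ⊆ ⇑T ⁻¹' (Subtype.val '' Metric.closedBall (0 : W) (‖T‖ + 1)) := by
      intro v hv
      refine ⟨⟨T v, hT v⟩, ?_, rfl⟩
      rw [Metric.mem_closedBall, dist_zero_right]
      have h1 : ‖(⟨T v, hT v⟩ : W)‖ = ‖T v‖ := rfl
      rw [h1]
      have h2 : ‖T v‖ ≤ ‖T‖ * ‖v‖ := T.le_opNorm v
      have h3 : ‖v‖ ≤ 1 := by
        rw [Metric.mem_ball, dist_zero_right] at hv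
        linarith
      have h4 := norm_nonneg T
      nlinarith
    exact Filter.mem_of_superset (Metric.ball_mem_nhds 0 one_pos) hsub

lemma isCompactOperator_finset_sum {ι : Type*} (s : Finset ι) (T : ι → (E →L[ℂ] F))
    (h : ∀ i ∈ s, IsCompactOperator ⇑(T i)) : IsCompactOperator ⇑(∑ i ∈ s, T i) := by
  classical
  induction s using Finset.induction_on with
  | empty => simpa using (isCompactOperator_zero : IsCompactOperator (0 : E → F))
  | @insert a s ha ih =>
      rw [Finset.sum_insert ha]
      have := (h a (Finset.mem_insert_self a s)).add
        (ih fun i hi => h i (Finset.mem_insert_of_mem hi))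
      have hco : ⇑(T a + ∑ x ∈ s, T x) = ⇑(T a) + ⇑(∑ x ∈ s, T x) :=
        ContinuousLinearMap.coe_add' _ _
      rw [hco]
      exact this

lemma isCompactOperator_of_approx [CompleteSpace F] (T : E →L[ℂ] F)
    (h : ∀ ε : ℝ, 0 < ε → ∃ S : E →L[ℂ] F, IsCompactOperator ⇑S ∧ ‖T - S‖ < ε) :
    IsCompactOperator ⇑T := by
  have hmem : T ∈ closure {S : E →L[ℂ] F | IsCompactOperator ⇑S} := by
    rw [Metric.mem_closure_iff]
    intro ε hε
    obtain ⟨S, hSc, hSn⟩ := h ε hε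
    exact ⟨S, hSc, by rwa [dist_eq_norm]⟩
  rw [isClosed_setOf_isCompactOperator.closure_eq] at hmem
  exact hmem

end Aux3

/-- **Local compactness of operators supported near the base of the cone** (Lemma 6.4 of
Bunke–Engel–Land, specialized to trivial coefficients): if `A` is supported at cone-parameters
`≤ n`, then for every `f : X → ℂ` vanishing at infinity both `Φ'(f) ∘ A` and `A ∘ Φ(f)` are
compact operators. -/
theorem locally_compact_near_the_base
    {G : Type*} [Group G]
    {X : Type*} [TopologicalSpace X] [LocallyCompactSpace X] [T2Space X]
    [MulAction G X] (hcont : ∀ g : G, Continuous fun x : X => g • x)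
    {H H' : Type*}
    [NormedAddCommGroup H] [InnerProductSpace ℂ H] [CompleteSpace H]
    [NormedAddCommGroup H'] [InnerProductSpace ℂ H'] [CompleteSpace H']
    (D D' : Set (ℝ≥0 × X × G))
    (P : D → (H →L[ℂ] H)) (P' : D' → (H' →L[ℂ] H'))
    (hP : OrthogonalDecomposition P) (hP' : OrthogonalDecomposition P')
    -- (a) the members of the decompositions are finite-dimensional
    (hfin : ∀ y : D, FiniteDimensional ℂ (LinearMap.range (P y : H →ₗ[ℂ] H)))
    (hfin' : ∀ y' : D', FiniteDimensional ℂ (LinearMap.range (P' y' : H' →ₗ[ℂ] H')))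
    -- (b) local finiteness of the index sets
    (hD : ∀ (n : ℕ) (B : Set X), IsCompact B →
      {y : D | (y.1.1 : ℝ) ≤ n ∧ y.1.2.1 ∈ B}.Finite)
    (hD' : ∀ (n : ℕ) (B : Set X), IsCompact B →
      {y' : D' | (y'.1.1 : ℝ) ≤ n ∧ y'.1.2.1 ∈ B}.Finite)
    (A : H →L[ℂ] H')
    -- `A` is supported at cone-parameters `≤ n`
    (hA : ∃ n : ℕ, ∀ (y : D) (y' : D'),
      ¬((y.1.1 : ℝ) ≤ n ∧ (y'.1.1 : ℝ) ≤ n) → (P' y').comp (A.comp (P y)) = 0)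
    -- `f` is continuous and vanishes at infinity
    (f : X → ℂ) (hf : Continuous f)
    (hf0 : ∀ ε : ℝ, 0 < ε → IsCompact {x : X | ε ≤ ‖f x‖})
    -- the diagonal multiplication operators associated with `f`
    (Φ : H →L[ℂ] H) (Φ' : H' →L[ℂ] H')
    (hΦ : ∀ (y : D) (v : H), P y v = v → Φ v = f y.1.2.1 • v)
    (hΦ' : ∀ (y' : D') (w : H'), P' y' w = w → Φ' w = f y'.1.2.1 • w) :
    IsCompactOperator ⇑(Φ'.comp A) ∧ IsCompactOperator ⇑(A.comp Φ) := by
  classical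
  obtain ⟨n, hn⟩ := hA
  have hAP : ∀ y : D, ¬((y.1.1 : ℝ) ≤ n) → A.comp (P y) = 0 := by
    intro y hy
    ext v
    refine od_eq_zero hP' _ fun y' => ?_
    have h := hn y y' (fun hc => hy hc.1)
    calc P' y' (A (P y v)) = ((P' y').comp (A.comp (P y))) v := rfl
      _ = 0 := by rw [h]; rfl
  have hPA : ∀ y' : D', ¬((y'.1.1 : ℝ) ≤ n) → (P' y').comp A = 0 := by
    intro y' hy'
    refine od_vanish hP _ fun y => ?_
    rw [ContinuousLinearMap.comp_assoc]
    exact hn y y' (fun hc => hy' hc.2)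
  constructor
  · -- `Φ' ∘ A` is compact
    refine isCompactOperator_of_approx _ fun ε hε => ?_
    set δ := ε / (2 * (‖A‖ + 1)) with hδdef
    have hδpos : 0 < δ := div_pos hε (by positivity)
    have hδnn : 0 ≤ δ := le_of_lt hδpos
    have hKc : IsCompact {x : X | δ ≤ ‖f x‖} := hf0 δ hδpos
    set F' : Finset D' := (hD' n {x : X | δ ≤ ‖f x‖} hKc).toFinset with hF'def
    refine ⟨∑ y' ∈ F', Φ'.comp ((P' y').comp A), ?_, ?_⟩
    · refine isCompactOperator_finset_sum _ _ fun y' _ => ?_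
      haveI := hfin' y'
      haveI : FiniteDimensional ℂ ((LinearMap.range (P' y' : H' →ₗ[ℂ] H')).map (Φ' : H' →ₗ[ℂ] H')) :=
        Module.Finite.map _ _
      refine compact_of_fin_rank _ ((LinearMap.range (P' y' : H' →ₗ[ℂ] H')).map (Φ' : H' →ₗ[ℂ] H')) ?_
      intro v
      exact Submodule.mem_map.mpr ⟨P' y' (A v), ⟨A v, rfl⟩, rfl⟩
    · have hbound : ∀ v : H,
          ‖(Φ'.comp A - ∑ y' ∈ F', Φ'.comp ((P' y').comp A)) v‖ ≤ δ * ‖A‖ * ‖v‖ := by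
        intro v
        have happ : (Φ'.comp A - ∑ y' ∈ F', Φ'.comp ((P' y').comp A)) v
            = Φ' (A v - ∑ y' ∈ F', P' y' (A v)) := by
          simp only [ContinuousLinearMap.sub_apply, ContinuousLinearMap.sum_apply,
            ContinuousLinearMap.comp_apply, map_sub, map_sum]
        rw [happ]
        set u := A v - ∑ y' ∈ F', P' y' (A v) with hudef
        have hu : ∀ y' : D', y' ∉ {z : D' | ‖f z.1.2.1‖ ≤ δ} → P' y' u = 0 := by
          intro y' hy'
          have hfx : δ ≤ ‖f y'.1.2.1‖ := le_of_not_ge (by simpa using hy')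
          rw [hudef, od_Q_comp hP' F' y' (A v)]
          by_cases hyF : y' ∈ F'
          · rw [if_pos hyF]
          · rw [if_neg hyF]
            have hns : ¬((y'.1.1 : ℝ) ≤ n) := by
              intro hsn
              exact hyF (by rw [hF'def, Set.Finite.mem_toFinset]; exact ⟨hsn, hfx⟩)
            calc P' y' (A v) = ((P' y').comp A) v := rfl
              _ = 0 := by rw [hPA y' hns]; rfl
        have hb := od_bound hP' {z : D' | ‖f z.1.2.1‖ ≤ δ} Φ' (ContinuousLinearMap.id ℂ H')
          (fun z => f z.1.2.1) δ hδnn (fun z hz => hz)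
          (fun z hz w hw => by rw [hΦ' z w hw, ContinuousLinearMap.id_apply]) u hu
        have hid : ‖(ContinuousLinearMap.id ℂ H')‖ ≤ 1 := ContinuousLinearMap.norm_id_le
        have hunorm : ‖u‖ ≤ ‖A v‖ := od_Q_norm hP' F' (A v)
        have hAv : ‖A v‖ ≤ ‖A‖ * ‖v‖ := A.le_opNorm v
        have h0u := norm_nonneg u
        have h0Av := norm_nonneg (A v)
        have h0id := norm_nonneg (ContinuousLinearMap.id ℂ H')
        calc ‖Φ' u‖ ≤ δ * ‖ContinuousLinearMap.id ℂ H'‖ * ‖u‖ := hb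
          _ ≤ δ * 1 * ‖A v‖ := by
              rw [mul_assoc, mul_assoc]
              refine mul_le_mul_of_nonneg_left ?_ hδnn
              exact mul_le_mul hid hunorm h0u zero_le_one
          _ = δ * ‖A v‖ := by ring
          _ ≤ δ * (‖A‖ * ‖v‖) := mul_le_mul_of_nonneg_left hAv hδnn
          _ = δ * ‖A‖ * ‖v‖ := by ring
      have hop : ‖Φ'.comp A - ∑ y' ∈ F', Φ'.comp ((P' y').comp A)‖ ≤ δ * ‖A‖ :=
        ContinuousLinearMap.opNorm_le_bound _ (by positivity) hbound
      refine lt_of_le_of_lt hop ?_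
      rw [hδdef, div_mul_eq_mul_div, div_lt_iff₀ (by positivity)]
      have hA0 := norm_nonneg A
      nlinarith
  · -- `A ∘ Φ` is compact
    refine isCompactOperator_of_approx _ fun ε hε => ?_
    set δ := ε / (2 * (‖A‖ + 1)) with hδdef
    have hδpos : 0 < δ := div_pos hε (by positivity)
    have hδnn : 0 ≤ δ := le_of_lt hδpos
    have hKc : IsCompact {x : X | δ ≤ ‖f x‖} := hf0 δ hδpos
    set Fq : Finset D := (hD n {x : X | δ ≤ ‖f x‖} hKc).toFinset with hFqdef
    refine ⟨∑ y ∈ Fq, (A.comp Φ).comp (P y), ?_, ?_⟩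
    · refine isCompactOperator_finset_sum _ _ fun y _ => ?_
      haveI := hfin y
      haveI : FiniteDimensional ℂ ((LinearMap.range (P y : H →ₗ[ℂ] H)).map ((A.comp Φ) : H →ₗ[ℂ] H')) :=
        Module.Finite.map _ _
      refine compact_of_fin_rank _ ((LinearMap.range (P y : H →ₗ[ℂ] H)).map ((A.comp Φ) : H →ₗ[ℂ] H')) ?_
      intro v
      exact Submodule.mem_map.mpr ⟨P y v, ⟨v, rfl⟩, rfl⟩
    · have hbound : ∀ v : H,
          ‖(A.comp Φ - ∑ y ∈ Fq, (A.comp Φ).comp (P y)) v‖ ≤ δ * ‖A‖ * ‖v‖ := by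
        intro v
        have happ : (A.comp Φ - ∑ y ∈ Fq, (A.comp Φ).comp (P y)) v
            = (A.comp Φ) (v - ∑ y ∈ Fq, P y v) := by
          simp only [ContinuousLinearMap.sub_apply, ContinuousLinearMap.sum_apply,
            ContinuousLinearMap.comp_apply, map_sub, map_sum]
        rw [happ]
        set u := v - ∑ y ∈ Fq, P y v with hudef
        set S : Set D := {z : D | ((z.1.1 : ℝ) ≤ n → ‖f z.1.2.1‖ ≤ δ)} with hSdef
        have hu : ∀ y : D, y ∉ S → P y u = 0 := by
          intro y hy
          have hy' : (y.1.1 : ℝ) ≤ n ∧ ¬‖f y.1.2.1‖ ≤ δ := by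
            by_contra hcon
            exact hy (fun hsn => by tauto)
          have hyF : y ∈ Fq := by
            rw [hFqdef, Set.Finite.mem_toFinset]
            exact ⟨hy'.1, le_of_not_ge hy'.2⟩
          rw [hudef, od_Q_comp hP Fq y v, if_pos hyF]
        have hB : ∀ z : D, z ∈ S → ∀ w : H, P z w = w →
            (A.comp Φ) w = (if (z.1.1 : ℝ) ≤ n then f z.1.2.1 else 0) • A w := by
          intro z hz w hw
          by_cases hsn : (z.1.1 : ℝ) ≤ n
          · rw [if_pos hsn, ContinuousLinearMap.comp_apply, hΦ z w hw, map_smul]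
          · rw [if_neg hsn]
            have hAw : A w = 0 := by
              conv_lhs => rw [← hw]
              calc A (P z w) = (A.comp (P z)) w := rfl
                _ = 0 := by rw [hAP z hsn]; rfl
            rw [ContinuousLinearMap.comp_apply, hΦ z w hw, map_smul, hAw, smul_zero, zero_smul]
        have hc : ∀ z : D, z ∈ S → ‖(if (z.1.1 : ℝ) ≤ n then f z.1.2.1 else 0)‖ ≤ δ := by
          intro z hz
          by_cases hsn : (z.1.1 : ℝ) ≤ n
          · rw [if_pos hsn]; exact hz hsn
          · rw [if_neg hsn]; simpa using hδnn
        have hb := od_bound hP S (A.comp Φ) A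
          (fun z => if (z.1.1 : ℝ) ≤ n then f z.1.2.1 else 0) δ hδnn hc hB u hu
        have hunorm : ‖u‖ ≤ ‖v‖ := od_Q_norm hP Fq v
        have h0A := norm_nonneg A
        calc ‖(A.comp Φ) u‖ ≤ δ * ‖A‖ * ‖u‖ := hb
          _ ≤ δ * ‖A‖ * ‖v‖ := by
            refine mul_le_mul_of_nonneg_left hunorm (by positivity)
      have hop : ‖A.comp Φ - ∑ y ∈ Fq, (A.comp Φ).comp (P y)‖ ≤ δ * ‖A‖ :=
        ContinuousLinearMap.opNorm_le_bound _ (by positivity) hbound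
      refine lt_of_le_of_lt hop ?_
      rw [hδdef, div_mul_eq_mul_div, div_lt_iff₀ (by positivity)]
      have hA0 := norm_nonneg A
      nlinarith
end

section
/- Let (X,d) be a metric space with an isometric action of a group G, and let (Y_s)_{s∈(0,∞)} be a family of G-invariant subsets of X with the following property: for every m ∈ ℕ and every compact subset B of X there exists C ∈ ℕ such that for all s ∈ (0,∞) and all x ∈ X the set Y_s ∩ B ∩ {y ∈ X : d(y,x) ≤ m·s} has at most C elements. Then for every compact subset B of X, every m ∈ ℕ and every finite subset F of G there exists N ∈ ℕ such that for all s ∈ [0,∞), x ∈ X and g ∈ G the set {(n,y,k) ∈ ℕ × X × G : 1 ≤ n, y ∈ Y_{1/n} ∩ B, |n − s| ≤ m, d(y,x) ≤ m, s·d(y,x) ≤ m, n·d(y,x) ≤ m, and g⁻¹k ∈ F} is finite with at most N elements. -/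
/-- **Local uniform finiteness of the canonical subset of the scaled cone** (the analytic core
of Proposition 5.13.1 of Bunke–Engel–Land): if `(Y_s)_{s ∈ (0,∞)}` is a family of `G`-invariant
subsets of a metric `G`-space `X` satisfying the counting condition of locally uniformly
bounded geometry, then the subset `L = {(n, y, k) : n ≥ 1, y ∈ Y_{1/n}, k ∈ G}` of
`O_{τ_d}(X) ⊗ G_{can,max}` is locally uniformly finite. -/
theorem locally_uniformly_finite_of_bounded_geometry
    {G : Type*} [Group G] {X : Type*} [MetricSpace X]
    [MulAction G X] (hiso : ∀ g : G, Isometry (fun x : X => g • x))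
    (Y : ℝ → Set X)
    (hinv : ∀ (g : G) (s : ℝ), 0 < s → ∀ x ∈ Y s, g • x ∈ Y s)
    (hcount : ∀ (m : ℕ) (B : Set X), IsCompact B → ∃ C : ℕ,
      ∀ (s : ℝ), 0 < s → ∀ x : X,
        {y : X | y ∈ Y s ∧ y ∈ B ∧ dist y x ≤ (m : ℝ) * s}.Finite ∧
        {y : X | y ∈ Y s ∧ y ∈ B ∧ dist y x ≤ (m : ℝ) * s}.ncard ≤ C) :
    ∀ (B : Set X), IsCompact B → ∀ (m : ℕ) (F : Finset G), ∃ N : ℕ,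
      ∀ (s : ℝ), 0 ≤ s → ∀ (x : X) (g : G),
        {z : ℕ × X × G | 1 ≤ z.1 ∧ z.2.1 ∈ Y (1 / (z.1 : ℝ)) ∧ z.2.1 ∈ B ∧
            |(z.1 : ℝ) - s| ≤ (m : ℝ) ∧ dist z.2.1 x ≤ (m : ℝ) ∧
            s * dist z.2.1 x ≤ (m : ℝ) ∧ (z.1 : ℝ) * dist z.2.1 x ≤ (m : ℝ) ∧
            g⁻¹ * z.2.2 ∈ F}.Finite ∧
        {z : ℕ × X × G | 1 ≤ z.1 ∧ z.2.1 ∈ Y (1 / (z.1 : ℝ)) ∧ z.2.1 ∈ B ∧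
            |(z.1 : ℝ) - s| ≤ (m : ℝ) ∧ dist z.2.1 x ≤ (m : ℝ) ∧
            s * dist z.2.1 x ≤ (m : ℝ) ∧ (z.1 : ℝ) * dist z.2.1 x ≤ (m : ℝ) ∧
            g⁻¹ * z.2.2 ∈ F}.ncard ≤ N := by

  classical
  intro B hB m F
  obtain ⟨C, hC⟩ := hcount m B hB
  refine ⟨(2 * m + 1) * (C * F.card), ?_⟩
  intro s hs x g
  set n0 : ℕ := ⌈s - (m : ℝ)⌉₊ with hn0
  have pos : ∀ n : ℕ, 1 ≤ n → (0 : ℝ) < 1 / (n : ℝ) := by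
    intro n hn
    have : (0 : ℝ) < (n : ℝ) := by exact_mod_cast hn
    positivity
  let Yfin : ℕ → Finset X := fun n =>
    if h : 1 ≤ n then ((hC (1 / (n : ℝ)) (pos n h) x).1).toFinset else ∅
  let K : Finset G := F.image (fun f => g * f)
  let I : Finset ℕ := Finset.Icc (max 1 n0) (n0 + 2 * m)
  let T : Finset (ℕ × X × G) := I.biUnion (fun n => {n} ×ˢ (Yfin n ×ˢ K))
  have hsub : {z : ℕ × X × G | 1 ≤ z.1 ∧ z.2.1 ∈ Y (1 / (z.1 : ℝ)) ∧ z.2.1 ∈ B ∧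
      |(z.1 : ℝ) - s| ≤ (m : ℝ) ∧ dist z.2.1 x ≤ (m : ℝ) ∧
      s * dist z.2.1 x ≤ (m : ℝ) ∧ (z.1 : ℝ) * dist z.2.1 x ≤ (m : ℝ) ∧
      g⁻¹ * z.2.2 ∈ F} ⊆ ↑T := by
    rintro ⟨n, y, k⟩ ⟨hn1, hY, hyB, habs, hd, hsd, hnd, hk⟩
    simp only [Set.mem_setOf_eq] at *
    have hnpos : (0 : ℝ) < (n : ℝ) := by exact_mod_cast hn1
    have habs' := abs_le.mp habs
    have hmemI : n ∈ I := by
      simp only [I, Finset.mem_Icc, max_le_iff]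
      refine ⟨⟨hn1, ?_⟩, ?_⟩
      · exact Nat.ceil_le.mpr (by linarith [habs'.2])
      · have h1 : (n : ℝ) ≤ s + m := by linarith [habs'.1]
        have h2 : s - (m : ℝ) ≤ (n0 : ℝ) := Nat.le_ceil _
        have : (n : ℝ) ≤ (n0 : ℝ) + 2 * m := by push_cast; linarith
        exact_mod_cast this
    have hmemY : y ∈ Yfin n := by
      simp only [Yfin, dif_pos hn1]
      rw [Set.Finite.mem_toFinset]
      refine ⟨hY, hyB, ?_⟩
      rw [mul_one_div, le_div_iff₀ hnpos]
      linarith [hnd]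
    have hmemK : k ∈ K := by
      simp only [K, Finset.mem_image]
      exact ⟨g⁻¹ * k, hk, by group⟩
    simp only [T, Finset.coe_biUnion, Set.mem_iUnion, Finset.mem_coe]
    exact ⟨n, hmemI, by simp [Finset.mem_product, hmemY, hmemK]⟩
  have hTfin := T.finite_toSet
  refine ⟨hTfin.subset hsub, ?_⟩
  have hcard : T.card ≤ (2 * m + 1) * (C * F.card) := by
    calc T.card ≤ ∑ n ∈ I, ({n} ×ˢ (Yfin n ×ˢ K)).card := Finset.card_biUnion_le
      _ ≤ ∑ n ∈ I, C * F.card := by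
          refine Finset.sum_le_sum ?_
          intro n hn
          have hn1 : 1 ≤ n := le_trans (le_max_left 1 n0) (Finset.mem_Icc.mp hn).1
          have hYc : (Yfin n).card ≤ C := by
            simp only [Yfin, dif_pos hn1]
            rw [← Set.ncard_eq_toFinset_card _ (hC (1 / (n : ℝ)) (pos n hn1) x).1]
            exact (hC (1 / (n : ℝ)) (pos n hn1) x).2
          have hKc : K.card ≤ F.card := Finset.card_image_le
          calc ({n} ×ˢ (Yfin n ×ˢ K)).card = 1 * ((Yfin n).card * K.card) := by
                simp [Finset.card_product]
            _ ≤ C * F.card := by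
                rw [one_mul]
                exact Nat.mul_le_mul hYc hKc
      _ = I.card * (C * F.card) := by rw [Finset.sum_const, smul_eq_mul]
      _ ≤ (2 * m + 1) * (C * F.card) := by
          refine Nat.mul_le_mul_right _ ?_
          have : I ⊆ Finset.Icc n0 (n0 + 2 * m) :=
            Finset.Icc_subset_Icc_left (le_max_right 1 n0)
          calc I.card ≤ (Finset.Icc n0 (n0 + 2 * m)).card := Finset.card_le_card this
            _ = 2 * m + 1 := by rw [Nat.card_Icc]; omega
  calc _ ≤ (↑T : Set (ℕ × X × G)).ncard := Set.ncard_le_ncard hsub hTfin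
    _ = T.card := Set.ncard_coe_finset T
    _ ≤ _ := hcard
end

section
/- Let G be a group acting by homeomorphisms on locally compact Hausdorff topological spaces X and Y, and assume that both actions are properly discontinuous and cocompact. Then every continuous G-equivariant map f : X → Y is proper: for every compact subset K of Y the preimage f⁻¹(K) is compact. -/
/-- **Properness of equivariant maps between proper cocompact `G`-spaces** (the properness part
of Lemma 11.2 of Bunke–Engel–Land): a continuous `G`-equivariant map between locally compact
Hausdorff spaces carrying properly discontinuous cocompact actions of a group `G` by
homeomorphisms is proper. -/
theorem equivariant_continuous_map_is_proper
    {G : Type*} [Group G] {X Y : Type*}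
    [TopologicalSpace X] [LocallyCompactSpace X] [T2Space X]
    [TopologicalSpace Y] [LocallyCompactSpace Y] [T2Space Y]
    [MulAction G X] [MulAction G Y]
    (hXcont : ∀ g : G, Continuous fun x : X => g • x)
    (hYcont : ∀ g : G, Continuous fun y : Y => g • y)
    -- the actions are properly discontinuous
    (hXpd : ∀ K : Set X, IsCompact K → {g : G | ∃ x ∈ K, g • x ∈ K}.Finite)
    (hYpd : ∀ K : Set Y, IsCompact K → {g : G | ∃ y ∈ K, g • y ∈ K}.Finite)
    -- the actions are cocompact
    (hXcc : ∃ B : Set X, IsCompact B ∧ ∀ x : X, ∃ g : G, ∃ b ∈ B, g • b = x)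
    (hYcc : ∃ B : Set Y, IsCompact B ∧ ∀ y : Y, ∃ g : G, ∃ b ∈ B, g • b = y)
    (f : X → Y) (hfc : Continuous f)
    (hfe : ∀ (g : G) (x : X), f (g • x) = g • f x) :
    ∀ K : Set Y, IsCompact K → IsCompact (f ⁻¹' K) := by
  intro K hK
  obtain ⟨B, hB, hBcov⟩ := hXcc
  set L : Set Y := f '' B ∪ K with hLdef
  have hL : IsCompact L := (hB.image hfc).union hK
  have hS : {g : G | ∃ y ∈ L, g • y ∈ L}.Finite := hYpd L hL
  have hC : IsCompact (⋃ g ∈ {g : G | ∃ y ∈ L, g • y ∈ L}, (g • ·) '' B) :=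
    hS.isCompact_biUnion fun g _ => hB.image (hXcont g)
  refine hC.of_isClosed_subset (hK.isClosed.preimage hfc) ?_
  intro x hx
  obtain ⟨g, b, hb, hgb⟩ := hBcov x
  have hgS : g ∈ {g : G | ∃ y ∈ L, g • y ∈ L} := by
    refine ⟨f b, Or.inl ⟨b, hb, rfl⟩, ?_⟩
    have : g • f b = f x := by rw [← hfe, hgb]
    exact this ▸ Or.inr hx
  exact Set.mem_biUnion hgS ⟨b, hb, hgb⟩
end

section
/- Let X be a uniform space with an action of a group G whose uniformity has an invariant entourage basis, and assume that the orbit space X/G, equipped with the quotient topology coming from the uniform topology of X, is compact. Then every G-invariant open subset U of X × X which contains the diagonal is an entourage of X. -/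
/-- **Invariant open neighbourhoods of the diagonal are entourages** (the key claim in the
proof of Lemma 11.2 of Bunke–Engel–Land): if a group `G` acts on a uniform space `X` whose
uniformity admits a basis of `G`-invariant entourages, and if the orbit space `X/G` with the
quotient topology is compact, then every `G`-invariant open subset of `X × X` containing the
diagonal belongs to the uniformity of `X`. -/
theorem invariant_open_nhd_of_diagonal_is_entourage
    {G : Type*} [Group G] {X : Type*} [UniformSpace X] [MulAction G X]
    -- the uniformity of `X` has an invariant entourage basis
    (hbasis : ∀ V ∈ uniformity X, ∃ W ∈ uniformity X, W ⊆ V ∧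
      ∀ (g : G) (x y : X), (x, y) ∈ W → (g • x, g • y) ∈ W)
    -- the orbit space is compact
    (hcompact : CompactSpace (Quotient (MulAction.orbitRel G X)))
    (U : Set (X × X)) (hUopen : IsOpen U)
    (hUinv : ∀ (g : G) (x y : X), (x, y) ∈ U → (g • x, g • y) ∈ U)
    (hUdiag : ∀ x : X, (x, x) ∈ U) :
    U ∈ uniformity X := by
  classical
  -- each `g` acts continuously, since the invariant basis makes the action uniformly continuous
  have hcont : ∀ g : G, Continuous (fun y : X => g • y) := by
    intro g
    refine UniformContinuous.continuous ?_
    rw [uniformContinuous_def]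
    intro Vv hVv
    obtain ⟨Ww, hWw, hWV, hWinv⟩ := hbasis Vv hVv
    exact Filter.mem_of_superset hWw fun p hp => hWV (hWinv g p.1 p.2 hp)
  -- for each `x` choose an entourage `V x` whose ball-square around `x` lies in `U`
  have key : ∀ x : X, ∃ V ∈ uniformity X,
      UniformSpace.ball x V ×ˢ UniformSpace.ball x V ⊆ U := by
    intro x
    have hU : U ∈ nhds (x, x) := hUopen.mem_nhds (hUdiag x)
    rw [nhds_prod_eq, Filter.mem_prod_iff] at hU
    obtain ⟨s, hs, t, ht, hst⟩ := hU
    obtain ⟨V, hV, hVs⟩ := UniformSpace.mem_nhds_iff.mp (Filter.inter_mem hs ht)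
    exact ⟨V, hV, fun p hp => hst ⟨(hVs hp.1).1, (hVs hp.2).2⟩⟩
  choose V hV hVU using key
  -- refine it to an invariant entourage `W x` with `compRel (W x) (W x) ⊆ V x`
  have key2 : ∀ x : X, ∃ W ∈ uniformity X,
      (∀ (g : G) (a b : X), (a, b) ∈ W → (g • a, g • b) ∈ W) ∧ SetRel.comp W W ⊆ V x := by
    intro x
    obtain ⟨Z, hZ, hZV⟩ := comp_mem_uniformity_sets (hV x)
    obtain ⟨W, hW, hWZ, hWinv⟩ := hbasis Z hZ
    exact ⟨W, hW, hWinv, (SetRel.comp_subset_comp hWZ hWZ).trans hZV⟩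
  choose W hW hWinv hWcomp using key2
  have hWV : ∀ x : X, W x ⊆ V x := fun x p hp => by
    have : (p.1, p.2) ∈ SetRel.comp (W x) (W x) :=
      SetRel.prodMk_mem_comp (refl_mem_uniformity (hW x)) hp
    exact hWcomp x this
  -- the "ball of the orbit of x"
  set B : X → Set X := fun x => {y | ∃ g : G, (g • x, y) ∈ W x} with hB
  have hBinv : ∀ (x : X) (g : G) (y : X), y ∈ B x → g • y ∈ B x := by
    rintro x g y ⟨h, hh⟩
    exact ⟨g * h, by rw [mul_smul]; exact hWinv x g _ _ hh⟩
  set O : X → Set X := fun x => interior (B x) with hO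
  have hOopen : ∀ x, IsOpen (O x) := fun x => isOpen_interior
  have hxO : ∀ x : X, x ∈ O x := by
    intro x
    have h1 : UniformSpace.ball x (W x) ⊆ B x := fun y hy => ⟨1, by rw [one_smul]; exact hy⟩
    exact mem_interior_iff_mem_nhds.mpr
      (Filter.mem_of_superset (UniformSpace.ball_mem_nhds x (hW x)) h1)
  have hOinv : ∀ (x : X) (g : G) (y : X), y ∈ O x → g • y ∈ O x := by
    intro x g y hy
    have hop : IsOpen ((fun z : X => g⁻¹ • z) ⁻¹' interior (B x)) :=
      (hcont g⁻¹).isOpen_preimage _ isOpen_interior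
    have hsub : (fun z : X => g⁻¹ • z) ⁻¹' interior (B x) ⊆ B x := by
      intro z hz
      have h1 : g⁻¹ • z ∈ B x := interior_subset hz
      have h2 := hBinv x g _ h1
      simpa using h2
    have hmem : g • y ∈ (fun z : X => g⁻¹ • z) ⁻¹' interior (B x) := by
      simpa using hy
    exact interior_maximal hsub hop hmem
  -- the images in the orbit space are open and cover it
  let π : X → Quotient (MulAction.orbitRel G X) := Quotient.mk _
  have hpre : ∀ x : X, π ⁻¹' (π '' O x) = O x := by
    intro x
    ext y
    constructor
    · rintro ⟨z, hz, hzy⟩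
      obtain ⟨g, hg⟩ : z ∈ MulAction.orbit G y := Quotient.eq''.mp hzy
      have := hOinv x g⁻¹ z hz
      rw [← hg] at this
      simpa using this
    · intro hy
      exact ⟨y, hy, rfl⟩
  have hopenIm : ∀ x : X, IsOpen (π '' O x) := by
    intro x
    rw [isOpen_coinduced (f := π)] at *
    · rw [show π ⁻¹' (π '' O x) = O x from hpre x]
      exact hOopen x
  have hcover : (Set.univ : Set (Quotient (MulAction.orbitRel G X))) ⊆
      ⋃ x : X, π '' O x := by
    rintro q -
    obtain ⟨y, rfl⟩ := Quotient.exists_rep q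
    exact Set.mem_iUnion.mpr ⟨y, y, hxO y, rfl⟩
  obtain ⟨t, ht⟩ := isCompact_univ.elim_finite_subcover (fun x => π '' O x) hopenIm hcover
  -- the finite intersection of the `W x` is the desired entourage inside `U`
  have hA : (⋂ x ∈ t, W x) ∈ uniformity X :=
    (Filter.biInter_finset_mem t).mpr fun x _ => hW x
  refine Filter.mem_of_superset hA ?_
  rintro ⟨y, z⟩ hyz
  have hy : π y ∈ ⋃ x ∈ t, π '' O x := ht (Set.mem_univ _)
  simp only [Set.mem_iUnion] at hy
  obtain ⟨i, hit, y', hy'O, hy'⟩ := hy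
  obtain ⟨g, hg⟩ : y' ∈ MulAction.orbit G y := Quotient.eq''.mp hy'
  obtain ⟨h, hh⟩ : y' ∈ B i := interior_subset hy'O
  rw [← hg] at hh
  -- let k = h⁻¹ * g; then (i, k • y) ∈ W i
  have h1 : (i, (h⁻¹ * g) • y) ∈ W i := by
    have := hWinv i h⁻¹ _ _ hh
    simpa [mul_smul] using this
  have hyzWi : (y, z) ∈ W i := by
    have := Set.mem_iInter₂.mp hyz i hit
    exact this
  have h2 : ((h⁻¹ * g) • y, (h⁻¹ * g) • z) ∈ W i := hWinv i _ _ _ hyzWi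
  have h3 : (i, (h⁻¹ * g) • z) ∈ SetRel.comp (W i) (W i) := SetRel.prodMk_mem_comp h1 h2
  have h4 : ((h⁻¹ * g) • y, (h⁻¹ * g) • z) ∈ U :=
    hVU i ⟨hWV i h1, hWcomp i h3⟩
  have h5 := hUinv (h⁻¹ * g)⁻¹ _ _ h4
  rw [inv_smul_smul, inv_smul_smul] at h5
  exact h5
end

section
/- Let X and Y be uniform spaces with actions of a group G whose uniformities both have invariant entourage bases, and assume that the orbit space X/G, with the quotient topology coming from the uniform topology of X, is compact. Then every continuous G-equivariant map f : X → Y is uniformly continuous. -/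
open UniformSpace Set Filter

lemma invariant_nhds_diag_mem_uniformity
    {G : Type*} [Group G] {X : Type*} [UniformSpace X] [MulAction G X]
    (hXbasis : ∀ V ∈ uniformity X, ∃ W ∈ uniformity X, W ⊆ V ∧
      ∀ (g : G) (x y : X), (x, y) ∈ W → (g • x, g • y) ∈ W)
    (hcompact : CompactSpace (Quotient (MulAction.orbitRel G X)))
    (U : Set (X × X))
    (hUinv : ∀ (g : G) (a b : X), (a, b) ∈ U → (g • a, g • b) ∈ U)
    (hUnhds : ∀ x : X, U ∈ nhds (x, x)) :
    U ∈ uniformity X := by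
  -- each g acts continuously
  have hcont : ∀ g : G, Continuous (fun a : X => g • a) := by
    intro g
    refine UniformContinuous.continuous ?_
    rw [uniformContinuous_def]
    intro V hV
    obtain ⟨W, hW, hWV, hWinv⟩ := hXbasis V hV
    exact mem_of_superset hW (fun p hp => hWV (hWinv g p.1 p.2 hp))
  -- for each x choose an entourage T with ball x T ×ˢ ball x T ⊆ U
  have hT : ∀ x : X, ∃ T ∈ uniformity X, ball x T ×ˢ ball x T ⊆ U := by
    intro x
    have hx := hUnhds x
    rw [mem_nhds_prod_iff] at hx
    obtain ⟨s, hs, t, ht, hst⟩ := hx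
    rw [UniformSpace.mem_nhds_iff] at hs ht
    obtain ⟨V1, hV1, hV1s⟩ := hs
    obtain ⟨V2, hV2, hV2t⟩ := ht
    refine ⟨V1 ∩ V2, inter_mem hV1 hV2, fun p hp => hst ?_⟩
    exact ⟨hV1s (ball_mono inter_subset_left x hp.1), hV2t (ball_mono inter_subset_right x hp.2)⟩
  choose T hT hTU using hT
  -- invariant W with W ○ W ⊆ T
  have hW : ∀ x : X, ∃ W ∈ uniformity X, SetRel.comp W W ⊆ T x ∧
      ∀ (g : G) (a b : X), (a, b) ∈ W → (g • a, g • b) ∈ W := by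
    intro x
    obtain ⟨S, hS, hSS⟩ := comp_mem_uniformity_sets (hT x)
    obtain ⟨W, hWu, hWS, hWinv⟩ := hXbasis S hS
    exact ⟨W, hWu, fun p hp => hSS (SetRel.comp_subset_comp hWS hWS hp), hWinv⟩
  choose W hWu hWcomp hWinv using hW
  -- open cover of the quotient
  set q : X → Quotient (MulAction.orbitRel G X) := Quotient.mk _ with hq
  set O : X → Set (Quotient (MulAction.orbitRel G X)) :=
    fun x => q '' (ball x (interior (W x))) with hO
  have hpre : ∀ x : X, q ⁻¹' (O x) = ⋃ g : G, (fun a : X => g • a) ⁻¹' (ball x (interior (W x))) := by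
    intro x
    ext a
    simp only [mem_preimage, mem_iUnion, hO, mem_image]
    constructor
    · rintro ⟨b, hb, hba⟩
      have hrel : b ∈ MulAction.orbit G a := Quotient.exact hba
      obtain ⟨g, hg⟩ := hrel
      exact ⟨g, by simpa [hg] using hb⟩
    · rintro ⟨g, hg⟩
      exact ⟨g • a, hg, Quotient.sound (MulAction.mem_orbit a g)⟩
  have hOopen : ∀ x : X, IsOpen (O x) := by
    intro x
    rw [← isQuotientMap_quotient_mk'.isOpen_preimage]
    show IsOpen (q ⁻¹' O x)
    rw [hpre]
    exact isOpen_iUnion fun g => (isOpen_ball x isOpen_interior).preimage (hcont g)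
  have hcover : (univ : Set (Quotient (MulAction.orbitRel G X))) ⊆ ⋃ x : X, O x := by
    rintro ⟨a⟩ -
    exact mem_iUnion.2 ⟨a, a, refl_mem_uniformity (interior_mem_uniformity (hWu a)), rfl⟩
  obtain ⟨t, ht⟩ := isCompact_univ.elim_finite_subcover O hOopen hcover
  -- the intersection entourage
  have hSmem : (⋂ x ∈ t, W x) ∈ uniformity X :=
    (Filter.biInter_mem t.finite_toSet).2 fun x _ => hWu x
  refine mem_of_superset hSmem ?_
  rintro ⟨a, b⟩ hab
  have : q a ∈ ⋃ x ∈ t, O x := ht (mem_univ _)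
  simp only [mem_iUnion] at this
  obtain ⟨x, hx, hqa⟩ := this
  obtain ⟨c, hc, hca⟩ := hqa
  have hrel : c ∈ MulAction.orbit G a := Quotient.exact hca
  obtain ⟨g, (hg : g • a = c)⟩ := hrel
  -- g⁻¹ • a = ... we have g • a = c? hg : g • a = c
  have hga : (x, g • a) ∈ W x := interior_subset (by rw [hg]; exact hc)
  have hab' : (g • a, g • b) ∈ W x := hWinv x g a b (by
    have := mem_iInter₂.1 hab x hx
    exact this)
  have hgb : (x, g • b) ∈ SetRel.comp (W x) (W x) := ⟨g • a, hga, hab'⟩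
  have hU' : (g • a, g • b) ∈ U := hTU x ⟨hWcomp x ⟨g • a, hga, refl_mem_uniformity (hWu x)⟩ , hWcomp x hgb⟩
  have := hUinv g⁻¹ _ _ hU'
  simpa using this



/-- **Uniform continuity of equivariant maps** (the uniform continuity part of Lemma 11.2 of
Bunke–Engel–Land): let `X` and `Y` be uniform spaces with actions of a group `G` whose
uniformities admit bases of `G`-invariant entourages, and assume the orbit space `X/G` with
the quotient topology is compact. Then every continuous `G`-equivariant map `f : X → Y` is
uniformly continuous. -/
theorem equivariant_continuous_map_is_uniformlyContinuous
    {G : Type*} [Group G] {X Y : Type*} [UniformSpace X] [UniformSpace Y]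
    [MulAction G X] [MulAction G Y]
    -- the uniformities have invariant entourage bases
    (hXbasis : ∀ V ∈ uniformity X, ∃ W ∈ uniformity X, W ⊆ V ∧
      ∀ (g : G) (x y : X), (x, y) ∈ W → (g • x, g • y) ∈ W)
    (hYbasis : ∀ V ∈ uniformity Y, ∃ W ∈ uniformity Y, W ⊆ V ∧
      ∀ (g : G) (x y : Y), (x, y) ∈ W → (g • x, g • y) ∈ W)
    -- the orbit space `X/G` is compact
    (hcompact : CompactSpace (Quotient (MulAction.orbitRel G X)))
    (f : X → Y) (hfc : Continuous f)
    (hfe : ∀ (g : G) (x : X), f (g • x) = g • f x) :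
    UniformContinuous f := by
  rw [uniformContinuous_def]
  intro V hV
  obtain ⟨W, hWu, hWV, hWinv⟩ := hYbasis V hV
  have key : {p : X × X | (f p.1, f p.2) ∈ W} ∈ uniformity X := by
    refine invariant_nhds_diag_mem_uniformity hXbasis hcompact _ ?_ ?_
    · intro g a b hab
      simpa [hfe] using hWinv g (f a) (f b) hab
    · intro x
      have : {p : X × X | (f p.1, f p.2) ∈ W} = (Prod.map f f) ⁻¹' W := rfl
      rw [this]
      exact (hfc.prodMap hfc).continuousAt.preimage_mem_nhds (nhds_le_uniformity (f x) hWu)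
  exact mem_of_superset key fun p hp => hWV hp
end

section
/- Let G be a group acting by homeomorphisms on a topological space X, and assume the action is properly discontinuous and cocompact. Let L be a subset of [0,∞) × X × G which is invariant under the action g • (s,x,k) := (s, g•x, g·k). Then the following are equivalent: (1) for every n ∈ ℕ and every compact subset K of X the set {(s,x,k) ∈ L : s ≤ n and x ∈ K} is finite; (2) for every n ∈ ℕ the set {(s,x,k) ∈ L : s ≤ n and k = 1} is finite. -/
open scoped NNReal

/-- **Continuous equivalence of the two cones** (Lemma 11.25 of Bunke–Engel–Land): for a
properly discontinuous cocompact action of `G` on `X` by homeomorphisms and a `G`-invariant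
subset `L` of `[0,∞) × X × G`, local finiteness with respect to the bornology of
`O(X) ⊗ G_{can,max}` (condition (1)) is equivalent to local finiteness with respect to the
bornology of `O(X_{B_max}) ⊗ G_{can,min}` (condition (2)). -/
theorem invariant_subset_locally_finite_iff
    {G : Type*} [Group G] {X : Type*} [TopologicalSpace X]
    [MulAction G X] (hcont : ∀ g : G, Continuous fun x : X => g • x)
    -- the action is properly discontinuous
    (hpd : ∀ K : Set X, IsCompact K → {g : G | ∃ x ∈ K, g • x ∈ K}.Finite)
    -- the action is cocompact
    (hcc : ∃ B : Set X, IsCompact B ∧ ∀ x : X, ∃ g : G, ∃ b ∈ B, g • b = x)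
    (L : Set (ℝ≥0 × X × G))
    (hinv : ∀ (g : G), ∀ z ∈ L, ((z : ℝ≥0 × X × G).1, g • z.2.1, g * z.2.2) ∈ L) :
    (∀ (n : ℕ) (K : Set X), IsCompact K →
        {z : ℝ≥0 × X × G | z ∈ L ∧ (z.1 : ℝ) ≤ n ∧ z.2.1 ∈ K}.Finite) ↔
      (∀ n : ℕ, {z : ℝ≥0 × X × G | z ∈ L ∧ (z.1 : ℝ) ≤ n ∧ z.2.2 = 1}.Finite) := by
  constructor
  · intro h1 n
    obtain ⟨B, hB, hBcc⟩ := hcc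
    have hfin := h1 n B hB
    choose g b hb hg using hBcc
    set f : ℝ≥0 × X × G → ℝ≥0 × X × G :=
      fun z => (z.1, (g z.2.1)⁻¹ • z.2.1, (g z.2.1)⁻¹) with hf
    apply Set.Finite.of_finite_image (f := f)
    · apply hfin.subset
      rintro w ⟨z, ⟨hzL, hzn, hz1⟩, rfl⟩
      refine ⟨?_, hzn, ?_⟩
      · have := hinv (g z.2.1)⁻¹ z hzL
        simpa [hf, hz1] using this
      · have hx := hg z.2.1
        have : (g z.2.1)⁻¹ • z.2.1 = b z.2.1 := inv_smul_eq_iff.mpr hx.symm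
        simpa [hf, this] using hb z.2.1
    · intro z hz w hw hfzw
      obtain ⟨h1', h2', h3⟩ :
          z.1 = w.1 ∧ (g z.2.1)⁻¹ • z.2.1 = (g w.2.1)⁻¹ • w.2.1 ∧
            (g z.2.1)⁻¹ = (g w.2.1)⁻¹ := by
        simpa [hf, Prod.ext_iff] using hfzw
      have hgeq : g z.2.1 = g w.2.1 := inv_injective h3
      have hx : z.2.1 = w.2.1 := by
        have := congrArg (fun x => g z.2.1 • x) h2'
        simpa [hgeq, smul_inv_smul] using this
      have hk : z.2.2 = w.2.2 := hz.2.2.trans hw.2.2.symm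
      exact Prod.ext h1' (Prod.ext hx hk)
  · intro h2 n K hK
    have hF := h2 n
    set F := {z : ℝ≥0 × X × G | z ∈ L ∧ (z.1 : ℝ) ≤ n ∧ z.2.2 = 1} with hFdef
    set Y : Set X := (fun z : ℝ≥0 × X × G => z.2.1) '' F with hYdef
    have hYfin : Y.Finite := hF.image _
    have hK' : IsCompact (K ∪ Y) := hK.union hYfin.isCompact
    have hGfin := hpd (K ∪ Y) hK'
    set f : ℝ≥0 × X × G → (ℝ≥0 × X × G) × G :=
      fun z => ((z.1, z.2.2⁻¹ • z.2.1, 1), z.2.2) with hf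
    apply Set.Finite.of_finite_image (f := f)
    · apply (hF.prod hGfin).subset
      rintro w ⟨z, ⟨hzL, hzn, hzK⟩, rfl⟩
      have hmem : (z.1, z.2.2⁻¹ • z.2.1, (1 : G)) ∈ F := by
        refine ⟨?_, hzn, rfl⟩
        simpa using hinv z.2.2⁻¹ z hzL
      constructor
      · exact hmem
      · refine ⟨z.2.2⁻¹ • z.2.1, Or.inr ⟨_, hmem, rfl⟩, ?_⟩
        simpa [hf] using Or.inl hzK
    · intro z hz w hw hfzw
      obtain ⟨⟨h1', h2'⟩, hk⟩ :
          (z.1 = w.1 ∧ z.2.2⁻¹ • z.2.1 = w.2.2⁻¹ • w.2.1) ∧ z.2.2 = w.2.2 := by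
        simpa [hf, Prod.ext_iff] using hfzw
      have hx : z.2.1 = w.2.1 := by
        have := congrArg (fun x => z.2.2 • x) h2'
        simpa [hk, smul_inv_smul] using this
      exact Prod.ext h1' (Prod.ext hx hk)
end

section
/- Let H and H' be complex Hilbert spaces, each equipped with an orthogonal decomposition indexed by the same set L: families (H_ℓ)_{ℓ∈L} and (H'_ℓ)_{ℓ∈L} of mutually orthogonal closed subspaces with dense algebraic span, with orthogonal projections P_ℓ and P'_ℓ. Let A : H → H' be a bounded operator, let c : L → ℂ be a bounded function, and let M : H → H and M' : H' → H' be bounded operators satisfying M v = c(ℓ)·v for all v ∈ H_ℓ and M' w = c(ℓ)·w for all w ∈ H'_ℓ. Let R ∈ ℕ and δ ≥ 0, and set S := {(ℓ',ℓ) ∈ L × L : P'_{ℓ'} ∘ A ∘ P_ℓ ≠ 0}. Assume: for every ℓ the set {ℓ' : (ℓ',ℓ) ∈ S} has at most R elements; for every ℓ' the set {ℓ : (ℓ',ℓ) ∈ S} has at most R elements; and |c(ℓ') − c(ℓ)| ≤ δ for all (ℓ',ℓ) ∈ S. Then ‖M' ∘ A − A ∘ M‖ ≤ R·δ·‖A‖.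 -/
section Aux

local notation "⟪" x ", " y "⟫" => @inner ℂ _ _ x y

variable {H : Type*} [NormedAddCommGroup H] [InnerProductSpace ℂ H]

lemma BCE.selfadj_inner_swap [CompleteSpace H] {T : H →L[ℂ] H} (hT : IsSelfAdjoint T) (x y : H) :
    ⟪T x, y⟫ = ⟪x, T y⟫ := by
  conv_lhs => rw [← ContinuousLinearMap.isSelfAdjoint_iff'.mp hT]
  exact ContinuousLinearMap.adjoint_inner_left T y x

/-- norm-squared of a finite sum of pairwise orthogonal vectors -/
lemma BCE.norm_sq_sum_of_orth {ι : Type*} (F : Finset ι) (w : ι → H)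
    (horth : ∀ i ∈ F, ∀ j ∈ F, i ≠ j → ⟪w i, w j⟫ = 0) :
    ‖∑ i ∈ F, w i‖ ^ 2 = ∑ i ∈ F, ‖w i‖ ^ 2 := by
  have h1 : ⟪∑ i ∈ F, w i, ∑ j ∈ F, w j⟫ = ∑ i ∈ F, ⟪w i, w i⟫ := by
    rw [sum_inner]
    refine Finset.sum_congr rfl fun i hi => ?_
    rw [inner_sum]
    exact Finset.sum_eq_single_of_mem i hi fun j hj hji => horth i hi j hj (Ne.symm hji)
  rw [← inner_self_eq_norm_sq (𝕜 := ℂ)]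
  rw [h1, map_sum]
  exact Finset.sum_congr rfl fun i _ => inner_self_eq_norm_sq (𝕜 := ℂ) (w i)

/-- If all but finitely many projections kill `x`, then `x` equals the sum of its pieces. -/
lemma BCE.od_sum_proj [CompleteSpace H] {I : Type*} {P : I → (H →L[ℂ] H)}
    (hP : OrthogonalDecomposition P)
    (F : Finset I) (x : H) (hx : ∀ j ∉ F, P j x = 0) :
    x = ∑ j ∈ F, P j x := by
  set y := x - ∑ j ∈ F, P j x with hy
  have hPy : ∀ j, P j y = 0 := by
    intro j
    have hsum : P j (∑ i ∈ F, P i x) = ∑ i ∈ F, P j (P i x) := map_sum (P j) _ F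
    by_cases hj : j ∈ F
    · have : ∑ i ∈ F, P j (P i x) = P j x := by
        refine Finset.sum_eq_single_of_mem j hj (fun i hi hij => ?_) |>.trans ?_
        · have := hP.orthogonal j i (Ne.symm hij)
          simpa using ContinuousLinearMap.ext_iff.mp this x
        · simpa using ContinuousLinearMap.ext_iff.mp (hP.idempotent j) x
      simp [hy, hsum, this]
    · have h0 : ∀ i ∈ F, P j (P i x) = 0 := by
        intro i hi
        have := hP.orthogonal j i (fun h => hj (h ▸ hi))
        simpa using ContinuousLinearMap.ext_iff.mp this x
      simp [hy, hsum, Finset.sum_congr rfl h0, hx j hj]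
  have horth : ∀ u ∈ ((⨆ i, LinearMap.range (P i : H →ₗ[ℂ] H)) : Submodule ℂ H), ⟪u, y⟫ = 0 := by
    intro u hu
    induction hu using Submodule.iSup_induction' with
    | mem i u hu =>
      obtain ⟨z, rfl⟩ := hu
      rw [ContinuousLinearMap.coe_coe, BCE.selfadj_inner_swap (hP.isSelfAdjoint i), hPy i, inner_zero_right]
    | zero => simp
    | add u v _ _ hu hv => rw [inner_add_left, hu, hv, add_zero]
  have hcont : Continuous fun u : H => ⟪u, y⟫ :=
    continuous_inner.comp (continuous_id.prodMk continuous_const)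
  have hall : ∀ u : H, ⟪u, y⟫ = 0 := by
    have := Continuous.ext_on hP.denseSpan hcont continuous_const
      (fun u hu => horth u hu)
    exact fun u => congrFun this u
  have hy0 : y = 0 := inner_self_eq_zero.mp (hall y)
  exact sub_eq_zero.mp (hy ▸ hy0)

end Aux

/-- **Block commutator estimate** (estimate (6.6) in the proof of Lemma 6.2 of
Bunke–Engel–Land): if the block support `S` of `A` has rows and columns of size at most `R`
and the multiplier `c` oscillates by at most `δ` over `S`, then
`‖M' ∘ A − A ∘ M‖ ≤ R·δ·‖A‖`. -/
theorem block_commutator_estimate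
    {L : Type*} {H H' : Type*}
    [NormedAddCommGroup H] [InnerProductSpace ℂ H] [CompleteSpace H]
    [NormedAddCommGroup H'] [InnerProductSpace ℂ H'] [CompleteSpace H']
    (P : L → (H →L[ℂ] H)) (P' : L → (H' →L[ℂ] H'))
    (hP : OrthogonalDecomposition P) (hP' : OrthogonalDecomposition P')
    (A : H →L[ℂ] H')
    (c : L → ℂ) (hc : ∃ C : ℝ, ∀ ℓ : L, ‖c ℓ‖ ≤ C)
    (M : H →L[ℂ] H) (M' : H' →L[ℂ] H')
    (hM : ∀ (ℓ : L) (v : H), P ℓ v = v → M v = c ℓ • v)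
    (hM' : ∀ (ℓ : L) (w : H'), P' ℓ w = w → M' w = c ℓ • w)
    (R : ℕ) (δ : ℝ) (hδ : 0 ≤ δ)
    -- the rows of the block support of `A` have at most `R` elements
    (hrow : ∀ ℓ : L, {ℓ' : L | (P' ℓ').comp (A.comp (P ℓ)) ≠ 0}.Finite ∧
      {ℓ' : L | (P' ℓ').comp (A.comp (P ℓ)) ≠ 0}.ncard ≤ R)
    -- the columns of the block support of `A` have at most `R` elements
    (hcol : ∀ ℓ' : L, {ℓ : L | (P' ℓ').comp (A.comp (P ℓ)) ≠ 0}.Finite ∧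
      {ℓ : L | (P' ℓ').comp (A.comp (P ℓ)) ≠ 0}.ncard ≤ R)
    -- `c` oscillates by at most `δ` over the block support of `A`
    (hosc : ∀ ℓ' ℓ : L, (P' ℓ').comp (A.comp (P ℓ)) ≠ 0 → ‖c ℓ' - c ℓ‖ ≤ δ) :
    ‖M'.comp A - A.comp M‖ ≤ (R : ℝ) * δ * ‖A‖ := by
  classical
  set D : H →L[ℂ] H' := M'.comp A - A.comp M with hD
  set K : ℝ := (R : ℝ) * δ * ‖A‖ with hK
  have hK0 : 0 ≤ K := by positivity
  -- basic projection facts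
  have oP : ∀ i j, i ≠ j → ∀ x : H, P i (P j x) = 0 := fun i j hij x => by
    simpa using ContinuousLinearMap.ext_iff.mp (hP.orthogonal i j hij) x
  have iP : ∀ i (x : H), P i (P i x) = P i x := fun i x => by
    simpa using ContinuousLinearMap.ext_iff.mp (hP.idempotent i) x
  have oP' : ∀ i j, i ≠ j → ∀ x : H', P' i (P' j x) = 0 := fun i j hij x => by
    simpa using ContinuousLinearMap.ext_iff.mp (hP'.orthogonal i j hij) x
  have iP' : ∀ i (x : H'), P' i (P' i x) = P' i x := fun i x => by
    simpa using ContinuousLinearMap.ext_iff.mp (hP'.idempotent i) x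
  -- core estimate on the dense subspace
  have hcore : ∀ v ∈ ((⨆ i, LinearMap.range (P i : H →ₗ[ℂ] H)) : Submodule ℂ H), ‖D v‖ ≤ K * ‖v‖ := by
    intro v hv
    obtain ⟨f, hf, hfsum⟩ := (Submodule.mem_iSup_iff_exists_finsupp _ v).mp hv
    set F : Finset L := f.support with hF
    have hx : ∀ j ∉ F, P j v = 0 := by
      intro j hj
      have : P j v = ∑ i ∈ F, P j (f i) := by
        rw [← hfsum, Finsupp.sum, map_sum]
      rw [this]
      refine Finset.sum_eq_zero fun i hi => ?_
      obtain ⟨z, hz⟩ := hf i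
      rw [← hz]
      exact oP j i (fun h => hj (h ▸ hi)) z
    have hv : v = ∑ ℓ ∈ F, P ℓ v := BCE.od_sum_proj hP F v hx
    -- the relevant finite sets of rows
    set rowF : L → Finset L := fun ℓ => (hrow ℓ).1.toFinset with hrowF
    set F' : Finset L := F.biUnion rowF with hF'
    set t : L → L → H' := fun ℓ' ℓ => P' ℓ' (A (P ℓ v)) with ht
    have hblock0 : ∀ ℓ' ℓ, (P' ℓ').comp (A.comp (P ℓ)) = 0 → t ℓ' ℓ = 0 := by
      intro ℓ' ℓ h
      simpa [ht] using ContinuousLinearMap.ext_iff.mp h v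
    -- each column piece decomposes over F'
    have hAdec : ∀ ℓ ∈ F, A (P ℓ v) = ∑ ℓ' ∈ F', t ℓ' ℓ := by
      intro ℓ hℓ
      refine BCE.od_sum_proj hP' F' (A (P ℓ v)) fun j hj => ?_
      have hjrow : j ∉ rowF ℓ := fun h => hj (Finset.mem_biUnion.mpr ⟨ℓ, hℓ, h⟩)
      have : (P' j).comp (A.comp (P ℓ)) = 0 := by
        by_contra hne
        exact hjrow ((hrow ℓ).1.mem_toFinset.mpr hne)
      simpa [ht] using hblock0 j ℓ this
    -- the commutator on each piece
    have hDpiece : ∀ ℓ ∈ F, D (P ℓ v) = ∑ ℓ' ∈ F', (c ℓ' - c ℓ) • t ℓ' ℓ := by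
      intro ℓ hℓ
      have hMv : M (P ℓ v) = c ℓ • P ℓ v := hM ℓ (P ℓ v) (iP ℓ v)
      have hM'v : M' (A (P ℓ v)) = ∑ ℓ' ∈ F', c ℓ' • t ℓ' ℓ := by
        rw [hAdec ℓ hℓ, map_sum]
        exact Finset.sum_congr rfl fun ℓ' _ => hM' ℓ' (t ℓ' ℓ) (iP' ℓ' _)
      have hAMv : A (M (P ℓ v)) = ∑ ℓ' ∈ F', c ℓ • t ℓ' ℓ := by
        rw [hMv, map_smul, hAdec ℓ hℓ, Finset.smul_sum]
      have : D (P ℓ v) = M' (A (P ℓ v)) - A (M (P ℓ v)) := by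
        simp [hD, ContinuousLinearMap.sub_apply]
      rw [this, hM'v, hAMv, ← Finset.sum_sub_distrib]
      exact Finset.sum_congr rfl fun ℓ' _ => (sub_smul _ _ _).symm
    -- assemble D v as an orthogonal sum over F'
    set w : L → H' := fun ℓ' => ∑ ℓ ∈ F, (c ℓ' - c ℓ) • t ℓ' ℓ with hw
    have hDv : D v = ∑ ℓ' ∈ F', w ℓ' := by
      conv_lhs => rw [hv]
      rw [map_sum]
      rw [Finset.sum_congr rfl hDpiece, Finset.sum_comm]
    have hPw : ∀ ℓ', P' ℓ' (w ℓ') = w ℓ' := by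
      intro ℓ'
      rw [hw, map_sum]
      exact Finset.sum_congr rfl fun ℓ _ => by rw [map_smul, ht, iP']
    have hworth : ∀ i ∈ F', ∀ j ∈ F', i ≠ j → @inner ℂ _ _ (w i) (w j) = 0 := by
      intro i _ j _ hij
      rw [← hPw i, ← hPw j, BCE.selfadj_inner_swap (hP'.isSelfAdjoint i),
        oP' i j hij, inner_zero_right]
    have hDvsq : ‖D v‖ ^ 2 = ∑ ℓ' ∈ F', ‖w ℓ'‖ ^ 2 := by
      rw [hDv]; exact BCE.norm_sq_sum_of_orth F' w hworth
    -- bound each ‖w ℓ'‖²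
    have hwsq : ∀ ℓ' ∈ F', ‖w ℓ'‖ ^ 2 ≤ (R : ℝ) * δ ^ 2 * ∑ ℓ ∈ F, ‖t ℓ' ℓ‖ ^ 2 := by
      intro ℓ' _
      set Fc : Finset L := F ∩ (hcol ℓ').1.toFinset with hFc
      have hFcR : (Fc.card : ℝ) ≤ (R : ℝ) := by
        have h1 : Fc.card ≤ ((hcol ℓ').1.toFinset).card :=
          Finset.card_le_card (Finset.inter_subset_right)
        have h2 : ((hcol ℓ').1.toFinset).card ≤ R := by
          rw [← Set.ncard_eq_toFinset_card _ (hcol ℓ').1]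
          exact (hcol ℓ').2
        exact_mod_cast h1.trans h2
      have hwFc : w ℓ' = ∑ ℓ ∈ Fc, (c ℓ' - c ℓ) • t ℓ' ℓ := by
        rw [hw]
        refine (Finset.sum_subset Finset.inter_subset_left fun ℓ hℓ hℓc => ?_).symm
        have : (P' ℓ').comp (A.comp (P ℓ)) = 0 := by
          by_contra hne
          exact hℓc (Finset.mem_inter.mpr ⟨hℓ, (hcol ℓ').1.mem_toFinset.mpr hne⟩)
        rw [hblock0 ℓ' ℓ this, smul_zero]
      have hnorm : ‖w ℓ'‖ ≤ ∑ ℓ ∈ Fc, δ * ‖t ℓ' ℓ‖ := by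
        rw [hwFc]
        refine (norm_sum_le _ _).trans (Finset.sum_le_sum fun ℓ hℓ => ?_)
        rw [norm_smul]
        have hne : (P' ℓ').comp (A.comp (P ℓ)) ≠ 0 :=
          (hcol ℓ').1.mem_toFinset.mp (Finset.mem_inter.mp hℓ).2
        exact mul_le_mul_of_nonneg_right (hosc ℓ' ℓ hne) (norm_nonneg _)
      calc ‖w ℓ'‖ ^ 2 ≤ (∑ ℓ ∈ Fc, δ * ‖t ℓ' ℓ‖) ^ 2 := by
            apply pow_le_pow_left₀ (norm_nonneg _) hnorm
        _ ≤ (Fc.card : ℝ) * ∑ ℓ ∈ Fc, (δ * ‖t ℓ' ℓ‖) ^ 2 := by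
            exact sq_sum_le_card_mul_sum_sq
        _ ≤ (R : ℝ) * ∑ ℓ ∈ Fc, (δ * ‖t ℓ' ℓ‖) ^ 2 := by
            apply mul_le_mul_of_nonneg_right hFcR
            positivity
        _ = (R : ℝ) * δ ^ 2 * ∑ ℓ ∈ Fc, ‖t ℓ' ℓ‖ ^ 2 := by
            rw [mul_assoc]
            congr 1
            rw [Finset.mul_sum]
            exact Finset.sum_congr rfl fun ℓ _ => by ring
        _ ≤ (R : ℝ) * δ ^ 2 * ∑ ℓ ∈ F, ‖t ℓ' ℓ‖ ^ 2 := by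
            apply mul_le_mul_of_nonneg_left _ (by positivity)
            exact Finset.sum_le_sum_of_subset_of_nonneg Finset.inter_subset_left
              fun ℓ _ _ => by positivity
    -- Bessel: for each ℓ, the row sum equals ‖A (P ℓ v)‖²
    have hrowsum : ∀ ℓ ∈ F, ∑ ℓ' ∈ F', ‖t ℓ' ℓ‖ ^ 2 = ‖A (P ℓ v)‖ ^ 2 := by
      intro ℓ hℓ
      have horth : ∀ i ∈ F', ∀ j ∈ F', i ≠ j → @inner ℂ _ _ (t i ℓ) (t j ℓ) = 0 := by
        intro i _ j _ hij
        have h1 : t i ℓ = P' i (t i ℓ) := (iP' i _).symm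
        have h2 : t j ℓ = P' j (t j ℓ) := (iP' j _).symm
        rw [h1, h2, BCE.selfadj_inner_swap (hP'.isSelfAdjoint i), oP' i j hij,
          inner_zero_right]
      rw [← BCE.norm_sq_sum_of_orth F' (fun ℓ' => t ℓ' ℓ) horth, ← hAdec ℓ hℓ]
    -- Parseval for v
    have hvsum : ∑ ℓ ∈ F, ‖P ℓ v‖ ^ 2 = ‖v‖ ^ 2 := by
      have horth : ∀ i ∈ F, ∀ j ∈ F, i ≠ j → @inner ℂ _ _ (P i v) (P j v) = 0 := by
        intro i _ j _ hij
        rw [BCE.selfadj_inner_swap (hP.isSelfAdjoint i), oP i j hij, inner_zero_right]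
      rw [← BCE.norm_sq_sum_of_orth F (fun ℓ => P ℓ v) horth, ← hv]
    -- put everything together
    have hmain : ‖D v‖ ^ 2 ≤ (R : ℝ) * δ ^ 2 * ‖A‖ ^ 2 * ‖v‖ ^ 2 := by
      calc ‖D v‖ ^ 2 = ∑ ℓ' ∈ F', ‖w ℓ'‖ ^ 2 := hDvsq
        _ ≤ ∑ ℓ' ∈ F', (R : ℝ) * δ ^ 2 * ∑ ℓ ∈ F, ‖t ℓ' ℓ‖ ^ 2 :=
            Finset.sum_le_sum hwsq
        _ = (R : ℝ) * δ ^ 2 * ∑ ℓ ∈ F, ∑ ℓ' ∈ F', ‖t ℓ' ℓ‖ ^ 2 := by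
            rw [← Finset.mul_sum, Finset.sum_comm]
        _ = (R : ℝ) * δ ^ 2 * ∑ ℓ ∈ F, ‖A (P ℓ v)‖ ^ 2 := by
            rw [Finset.sum_congr rfl hrowsum]
        _ ≤ (R : ℝ) * δ ^ 2 * ∑ ℓ ∈ F, ‖A‖ ^ 2 * ‖P ℓ v‖ ^ 2 := by
            apply mul_le_mul_of_nonneg_left _ (by positivity)
            refine Finset.sum_le_sum fun ℓ _ => ?_
            rw [← mul_pow]
            exact pow_le_pow_left₀ (norm_nonneg _) (A.le_opNorm _) 2
        _ = (R : ℝ) * δ ^ 2 * ‖A‖ ^ 2 * ‖v‖ ^ 2 := by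
            rw [← Finset.mul_sum, hvsum]; ring
    have hRsq : (R : ℝ) ≤ (R : ℝ) ^ 2 := by
      exact_mod_cast Nat.le_self_pow two_ne_zero R
    have hsq : ‖D v‖ ^ 2 ≤ (K * ‖v‖) ^ 2 := by
      calc ‖D v‖ ^ 2 ≤ (R : ℝ) * δ ^ 2 * ‖A‖ ^ 2 * ‖v‖ ^ 2 := hmain
        _ ≤ (R : ℝ) ^ 2 * δ ^ 2 * ‖A‖ ^ 2 * ‖v‖ ^ 2 := by
            have : (0 : ℝ) ≤ δ ^ 2 * ‖A‖ ^ 2 * ‖v‖ ^ 2 := by positivity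
            nlinarith [hRsq]
        _ = (K * ‖v‖) ^ 2 := by rw [hK]; ring
    have h1 : ‖D v‖ ≤ K * ‖v‖ := by
      have := Real.sqrt_le_sqrt hsq
      rwa [Real.sqrt_sq (norm_nonneg _), Real.sqrt_sq (by positivity)] at this
    exact h1
  -- extend by density
  refine D.opNorm_le_bound hK0 fun v => ?_
  have hclosed : IsClosed {v : H | ‖D v‖ ≤ K * ‖v‖} :=
    isClosed_le (D.continuous.norm) (continuous_const.mul continuous_norm)
  have hsub : (((⨆ i, LinearMap.range (P i : H →ₗ[ℂ] H)) : Submodule ℂ H) : Set H) ⊆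
      {v : H | ‖D v‖ ≤ K * ‖v‖} := fun u hu => hcore u hu
  have : v ∈ closure {v : H | ‖D v‖ ≤ K * ‖v‖} :=
    closure_mono hsub (hP.denseSpan v)
  exact hclosed.closure_subset this
end

section
/- Let H and H' be complex Hilbert spaces equipped with orthogonal decompositions (H_ℓ)_{ℓ∈L} of H and (H'_{ℓ'})_{ℓ'∈L'} of H' (mutually orthogonal closed subspaces with dense algebraic span), with orthogonal projections P_ℓ and P'_{ℓ'}. Let B : H → H' be a bounded operator, R ∈ ℕ and c ≥ 0, and assume: ‖P'_{ℓ'} ∘ B ∘ P_ℓ‖ ≤ c for all ℓ ∈ L and ℓ' ∈ L'; for every ℓ ∈ L the set {ℓ' ∈ L' : P'_{ℓ'} ∘ B ∘ P_ℓ ≠ 0} has at most R elements; and for every ℓ' ∈ L' the set {ℓ ∈ L : P'_{ℓ'} ∘ B ∘ P_ℓ ≠ 0} has at most R elements. Then ‖B‖ ≤ R·c. -/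
open scoped InnerProductSpace ComplexConjugate

theorem pythag {H : Type*} [NormedAddCommGroup H] [InnerProductSpace ℂ H]
    {ι : Type*} (s : Finset ι) (f : ι → H)
    (h : ∀ i ∈ s, ∀ j ∈ s, i ≠ j → ⟪f i, f j⟫_ℂ = 0) :
    ‖∑ i ∈ s, f i‖ ^ 2 = ∑ i ∈ s, ‖f i‖ ^ 2 := by
  have h1 : (⟪∑ i ∈ s, f i, ∑ j ∈ s, f j⟫_ℂ) = ∑ i ∈ s, ∑ j ∈ s, ⟪f i, f j⟫_ℂ := by
    rw [sum_inner]; exact Finset.sum_congr rfl fun i _ => inner_sum ..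
  have h2 : ∑ i ∈ s, ∑ j ∈ s, ⟪f i, f j⟫_ℂ = ∑ i ∈ s, ⟪f i, f i⟫_ℂ := by
    refine Finset.sum_congr rfl fun i hi => ?_
    exact Finset.sum_eq_single i (fun j hj hne => h i hi j hj (Ne.symm hne)) (fun h' => absurd hi h')
  have h3 := inner_self_eq_norm_sq (𝕜 := ℂ) (∑ i ∈ s, f i)
  rw [← h3, h1, h2, map_sum]
  exact Finset.sum_congr rfl fun i _ => inner_self_eq_norm_sq (𝕜 := ℂ) (f i)

set_option maxHeartbeats 1000000 in
/-- **Norm bound for block operators with uniformly finitely supported rows and columns**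
(the step in the proof of Lemma 6.2 of Bunke–Engel–Land using the mutual orthogonality of the
family `(v_ℓ)`): if all blocks of `B` have norm at most `c` and every row and every column of
the block support has at most `R` elements, then `‖B‖ ≤ R·c`. -/
theorem block_operator_norm_estimate
    {L L' : Type*} {H H' : Type*}
    [NormedAddCommGroup H] [InnerProductSpace ℂ H] [CompleteSpace H]
    [NormedAddCommGroup H'] [InnerProductSpace ℂ H'] [CompleteSpace H']
    (P : L → (H →L[ℂ] H)) (P' : L' → (H' →L[ℂ] H'))
    (hP : OrthogonalDecomposition P) (hP' : OrthogonalDecomposition P')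
    (B : H →L[ℂ] H') (R : ℕ) (c : ℝ) (hc : 0 ≤ c)
    (hbound : ∀ (ℓ : L) (ℓ' : L'), ‖(P' ℓ').comp (B.comp (P ℓ))‖ ≤ c)
    (hrow : ∀ ℓ : L, {ℓ' : L' | (P' ℓ').comp (B.comp (P ℓ)) ≠ 0}.Finite ∧
      {ℓ' : L' | (P' ℓ').comp (B.comp (P ℓ)) ≠ 0}.ncard ≤ R)
    (hcol : ∀ ℓ' : L', {ℓ : L | (P' ℓ').comp (B.comp (P ℓ)) ≠ 0}.Finite ∧
      {ℓ : L | (P' ℓ').comp (B.comp (P ℓ)) ≠ 0}.ncard ≤ R) :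
    ‖B‖ ≤ (R : ℝ) * c := by
  classical
  set D : Submodule ℂ H := ⨆ i, LinearMap.range (P i : H →ₗ[ℂ] H) with hD
  set D' : Submodule ℂ H' := ⨆ i, LinearMap.range (P' i : H' →ₗ[ℂ] H') with hD'
  set Q : L → L' → (H →L[ℂ] H') := fun ℓ ℓ' => (P' ℓ').comp (B.comp (P ℓ)) with hQ
  -- master inequality
  have master : ∀ x ∈ D, ∀ y ∈ D',
      ‖⟪y, B x⟫_ℂ‖ ≤ (R * c / 2) * (‖x‖ ^ 2 + ‖y‖ ^ 2) := by
    intro x hx y hy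
    obtain ⟨f, hf, hfx⟩ := (Submodule.mem_iSup_iff_exists_finsupp _ x).mp hx
    obtain ⟨g, hg, hgy⟩ := (Submodule.mem_iSup_iff_exists_finsupp _ y).mp hy
    -- fixed points
    have hPf : ∀ ℓ, P ℓ (f ℓ) = f ℓ := by
      intro ℓ; obtain ⟨u, hu⟩ := hf ℓ
      rw [← hu]
      exact DFunLike.congr_fun (hP.idempotent ℓ) u
    have hPg : ∀ ℓ', P' ℓ' (g ℓ') = g ℓ' := by
      intro ℓ'; obtain ⟨u, hu⟩ := hg ℓ'
      rw [← hu]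
      exact DFunLike.congr_fun (hP'.idempotent ℓ') u
    -- orthogonality
    have horthf : ∀ i ∈ f.support, ∀ j ∈ f.support, i ≠ j → ⟪f i, f j⟫_ℂ = 0 := by
      intro i _ j _ hij
      have h0 : P i (P j (f j)) = 0 := DFunLike.congr_fun (hP.orthogonal i j hij) (f j)
      calc ⟪f i, f j⟫_ℂ = ⟪P i (f i), P j (f j)⟫_ℂ := by rw [hPf, hPf]
        _ = ⟪f i, P i (P j (f j))⟫_ℂ := (hP.isSelfAdjoint i).isSymmetric _ _
        _ = 0 := by rw [h0, inner_zero_right]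
    have horthg : ∀ i ∈ g.support, ∀ j ∈ g.support, i ≠ j → ⟪g i, g j⟫_ℂ = 0 := by
      intro i _ j _ hij
      have h0 : P' i (P' j (g j)) = 0 := DFunLike.congr_fun (hP'.orthogonal i j hij) (g j)
      calc ⟪g i, g j⟫_ℂ = ⟪P' i (g i), P' j (g j)⟫_ℂ := by rw [hPg, hPg]
        _ = ⟪g i, P' i (P' j (g j))⟫_ℂ := (hP'.isSelfAdjoint i).isSymmetric _ _
        _ = 0 := by rw [h0, inner_zero_right]
    have hxn : ‖x‖ ^ 2 = ∑ ℓ ∈ f.support, ‖f ℓ‖ ^ 2 := by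
      rw [← hfx]; exact pythag _ _ horthf
    have hyn : ‖y‖ ^ 2 = ∑ ℓ' ∈ g.support, ‖g ℓ'‖ ^ 2 := by
      rw [← hgy]; exact pythag _ _ horthg
    -- expansion
    have hexp : ⟪y, B x⟫_ℂ = ∑ ℓ' ∈ g.support, ∑ ℓ ∈ f.support, ⟪g ℓ', Q ℓ ℓ' (f ℓ)⟫_ℂ := by
      rw [← hfx, ← hgy]
      rw [Finsupp.sum, Finsupp.sum, map_sum, sum_inner]
      refine Finset.sum_congr rfl fun ℓ' _ => ?_
      rw [inner_sum]
      refine Finset.sum_congr rfl fun ℓ _ => ?_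
      calc ⟪g ℓ', B (f ℓ)⟫_ℂ = ⟪P' ℓ' (g ℓ'), B (f ℓ)⟫_ℂ := by rw [hPg]
        _ = ⟪g ℓ', P' ℓ' (B (f ℓ))⟫_ℂ := (hP'.isSelfAdjoint ℓ').isSymmetric _ _
        _ = ⟪g ℓ', Q ℓ ℓ' (f ℓ)⟫_ℂ := by
            simp only [hQ, ContinuousLinearMap.comp_apply, hPf ℓ]
    -- bound each term
    have hterm : ∀ ℓ ∈ f.support, ∀ ℓ' ∈ g.support, ‖⟪g ℓ', Q ℓ ℓ' (f ℓ)⟫_ℂ‖ ≤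
        (if Q ℓ ℓ' = 0 then 0 else c * ‖f ℓ‖ * ‖g ℓ'‖) := by
      intro ℓ _ ℓ' _
      by_cases h0 : Q ℓ ℓ' = 0
      · simp [h0]
      · rw [if_neg h0]
        calc ‖⟪g ℓ', Q ℓ ℓ' (f ℓ)⟫_ℂ‖ ≤ ‖g ℓ'‖ * ‖Q ℓ ℓ' (f ℓ)‖ := norm_inner_le_norm _ _
          _ ≤ ‖g ℓ'‖ * (c * ‖f ℓ‖) := by
              refine mul_le_mul_of_nonneg_left ?_ (norm_nonneg _)
              calc ‖Q ℓ ℓ' (f ℓ)‖ ≤ ‖Q ℓ ℓ'‖ * ‖f ℓ‖ := (Q ℓ ℓ').le_opNorm _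
                _ ≤ c * ‖f ℓ‖ := mul_le_mul_of_nonneg_right (hbound ℓ ℓ') (norm_nonneg _)
          _ = c * ‖f ℓ‖ * ‖g ℓ'‖ := by ring
    have hAMGM : ∀ ℓ ℓ', (if Q ℓ ℓ' = 0 then (0:ℝ) else c * ‖f ℓ‖ * ‖g ℓ'‖) ≤
        (if Q ℓ ℓ' = 0 then 0 else (c/2) * (‖f ℓ‖^2 + ‖g ℓ'‖^2)) := by
      intro ℓ ℓ'
      by_cases h0 : Q ℓ ℓ' = 0
      · simp [h0]
      · rw [if_neg h0, if_neg h0]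
        nlinarith [sq_nonneg (‖f ℓ‖ - ‖g ℓ'‖), norm_nonneg (f ℓ), norm_nonneg (g ℓ')]
    -- row/col cardinality bounds
    have hrowcard : ∀ ℓ, ((g.support.filter (fun ℓ' => Q ℓ ℓ' ≠ 0)).card : ℝ) ≤ R := by
      intro ℓ
      have hsub : ↑(g.support.filter (fun ℓ' => Q ℓ ℓ' ≠ 0)) ⊆ {ℓ' : L' | Q ℓ ℓ' ≠ 0} := by
        intro a ha; simp only [Finset.coe_filter, Set.mem_setOf_eq] at ha ⊢; exact ha.2
      have := Set.ncard_le_ncard hsub (hrow ℓ).1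
      rw [Set.ncard_coe_finset] at this
      exact_mod_cast this.trans (hrow ℓ).2
    have hcolcard : ∀ ℓ', ((f.support.filter (fun ℓ => Q ℓ ℓ' ≠ 0)).card : ℝ) ≤ R := by
      intro ℓ'
      have hsub : ↑(f.support.filter (fun ℓ => Q ℓ ℓ' ≠ 0)) ⊆ {ℓ : L | Q ℓ ℓ' ≠ 0} := by
        intro a ha; simp only [Finset.coe_filter, Set.mem_setOf_eq] at ha ⊢; exact ha.2
      have := Set.ncard_le_ncard hsub (hcol ℓ').1
      rw [Set.ncard_coe_finset] at this
      exact_mod_cast this.trans (hcol ℓ').2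
    calc ‖⟪y, B x⟫_ℂ‖ ≤ ∑ ℓ' ∈ g.support, ∑ ℓ ∈ f.support,
          (if Q ℓ ℓ' = 0 then (0:ℝ) else (c/2) * (‖f ℓ‖^2 + ‖g ℓ'‖^2)) := by
          rw [hexp]
          refine (norm_sum_le _ _).trans (Finset.sum_le_sum fun ℓ' hℓ' => ?_)
          refine (norm_sum_le _ _).trans (Finset.sum_le_sum fun ℓ hℓ => ?_)
          exact (hterm ℓ hℓ ℓ' hℓ').trans (hAMGM ℓ ℓ')
      _ = (c/2) * ((∑ ℓ' ∈ g.support, ∑ ℓ ∈ f.support,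
            (if Q ℓ ℓ' = 0 then (0:ℝ) else ‖f ℓ‖^2)) +
            (∑ ℓ' ∈ g.support, ∑ ℓ ∈ f.support,
            (if Q ℓ ℓ' = 0 then (0:ℝ) else ‖g ℓ'‖^2))) := by
          rw [← Finset.sum_add_distrib, Finset.mul_sum]
          refine Finset.sum_congr rfl fun ℓ' _ => ?_
          rw [← Finset.sum_add_distrib, Finset.mul_sum]
          refine Finset.sum_congr rfl fun ℓ _ => ?_
          by_cases h0 : Q ℓ ℓ' = 0 <;> simp [h0]
      _ ≤ (c/2) * ((R * ‖x‖^2) + (R * ‖y‖^2)) := by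
          refine mul_le_mul_of_nonneg_left (add_le_add ?_ ?_) (by linarith)
          · rw [Finset.sum_comm, hxn, Finset.mul_sum]
            refine Finset.sum_le_sum fun ℓ _ => ?_
            have hre : ∀ a, (if Q ℓ a = 0 then (0:ℝ) else ‖f ℓ‖^2)
                = (if Q ℓ a ≠ 0 then ‖f ℓ‖^2 else 0) := fun a => by
              by_cases h : Q ℓ a = 0 <;> simp [h]
            simp only [hre]
            rw [← Finset.sum_filter, Finset.sum_const, nsmul_eq_mul]
            exact mul_le_mul_of_nonneg_right (hrowcard ℓ) (by positivity)
          · rw [hyn, Finset.mul_sum]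
            refine Finset.sum_le_sum fun ℓ' _ => ?_
            have hre : ∀ a, (if Q a ℓ' = 0 then (0:ℝ) else ‖g ℓ'‖^2)
                = (if Q a ℓ' ≠ 0 then ‖g ℓ'‖^2 else 0) := fun a => by
              by_cases h : Q a ℓ' = 0 <;> simp [h]
            simp only [hre]
            rw [← Finset.sum_filter, Finset.sum_const, nsmul_eq_mul]
            exact mul_le_mul_of_nonneg_right (hcolcard ℓ') (by positivity)
      _ = (R * c / 2) * (‖x‖ ^ 2 + ‖y‖ ^ 2) := by ring
  -- rescaled inequality on dense sets
  have dense2 : ∀ x ∈ D, ∀ y ∈ D', ‖⟪y, B x⟫_ℂ‖ ≤ (R * c) * ‖x‖ * ‖y‖ := by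
    intro x hx y hy
    by_cases hx0 : x = 0
    · simp [hx0]
    by_cases hy0 : y = 0
    · simp [hy0]
    have hxn : 0 < ‖x‖ := norm_pos_iff.mpr hx0
    have hyn : 0 < ‖y‖ := norm_pos_iff.mpr hy0
    set s : ℝ := Real.sqrt (‖y‖ / ‖x‖) with hs
    have hs0 : 0 < s := Real.sqrt_pos.mpr (by positivity)
    have hs2 : s ^ 2 = ‖y‖ / ‖x‖ := Real.sq_sqrt (by positivity)
    have hx' : (s : ℂ) • x ∈ D := D.smul_mem _ hx
    have hy' : ((s⁻¹ : ℝ) : ℂ) • y ∈ D' := D'.smul_mem _ hy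
    have key := master _ hx' _ hy'
    have hinner : ⟪((s⁻¹ : ℝ) : ℂ) • y, B ((s : ℂ) • x)⟫_ℂ = ⟪y, B x⟫_ℂ := by
      rw [map_smul, inner_smul_left, inner_smul_right, Complex.conj_ofReal]
      rw [← mul_assoc, ← Complex.ofReal_mul, inv_mul_cancel₀ hs0.ne']
      simp
    rw [hinner, norm_smul, norm_smul] at key
    simp only [Complex.norm_real, Real.norm_eq_abs, abs_of_pos hs0,
      abs_of_pos (inv_pos.mpr hs0)] at key
    calc ‖⟪y, B x⟫_ℂ‖ ≤ (R * c / 2) * ((s * ‖x‖) ^ 2 + (s⁻¹ * ‖y‖) ^ 2) := key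
      _ = (R * c) * ‖x‖ * ‖y‖ := by
          have h1 : (s * ‖x‖) ^ 2 = ‖y‖ * ‖x‖ := by
            rw [mul_pow, hs2]; field_simp
          have h2 : (s⁻¹ * ‖y‖) ^ 2 = ‖x‖ * ‖y‖ := by
            rw [mul_pow, inv_pow, hs2]; field_simp
          rw [h1, h2]; ring
  -- extend by density
  have dense3 : ∀ (x : H) (y : H'), ‖⟪y, B x⟫_ℂ‖ ≤ (R * c) * ‖x‖ * ‖y‖ := by
    intro x y
    have hdense : Dense ((D : Set H) ×ˢ (D' : Set H')) := hP.denseSpan.prod hP'.denseSpan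
    have hclosed : IsClosed {p : H × H' | ‖⟪p.2, B p.1⟫_ℂ‖ ≤ (R * c) * ‖p.1‖ * ‖p.2‖} := by
      apply isClosed_le
      · exact (Continuous.inner continuous_snd (B.continuous.comp continuous_fst)).norm
      · exact (continuous_const.mul continuous_fst.norm).mul continuous_snd.norm
    have hsub : ((D : Set H) ×ˢ (D' : Set H')) ⊆
        {p : H × H' | ‖⟪p.2, B p.1⟫_ℂ‖ ≤ (R * c) * ‖p.1‖ * ‖p.2‖} := by
      rintro ⟨a, b⟩ ⟨ha, hb⟩
      exact dense2 a ha b hb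
    have : (Set.univ : Set (H × H')) ⊆
        {p : H × H' | ‖⟪p.2, B p.1⟫_ℂ‖ ≤ (R * c) * ‖p.1‖ * ‖p.2‖} := by
      rw [← hdense.closure_eq]
      exact hclosed.closure_subset_iff.mpr hsub
    exact this (Set.mem_univ (x, y))
  -- conclude
  refine B.opNorm_le_bound (by positivity) fun x => ?_
  by_cases hBx : B x = 0
  · rw [hBx, norm_zero]; positivity
  have hBxn : 0 < ‖B x‖ := norm_pos_iff.mpr hBx
  have := dense3 x (B x)
  have hsq : ‖B x‖ ^ 2 ≤ (R * c) * ‖x‖ * ‖B x‖ := by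
    calc ‖B x‖ ^ 2 = RCLike.re ⟪B x, B x⟫_ℂ := (inner_self_eq_norm_sq (𝕜 := ℂ) _).symm
      _ = ‖(⟪B x, B x⟫_ℂ : ℂ)‖ := inner_self_re_eq_norm _
      _ ≤ (R * c) * ‖x‖ * ‖B x‖ := this
  have := le_of_mul_le_mul_right (by nlinarith : ‖B x‖ * ‖B x‖ ≤ ((R:ℝ) * c * ‖x‖) * ‖B x‖) hBxn
  linarith
end

section
/- Let H and H' be complex Hilbert spaces and A : H → H' a bounded operator. Let (T_k)_{k∈K} be a family of bounded operators on H such that Σ_{k∈K'} T_k T_k* ≤ 1 (in the order on self-adjoint operators) for every finite subset K' of K, and let (S_l)_{l∈L} be a family of bounded operators on H' such that Σ_{l∈L'} S_l* S_l ≤ 1 for every finite subset L' of L. Then for all finite subsets K' ⊆ K and L' ⊆ L and every family (ξ_k)_{k∈K'} of vectors of H one has Σ_{l∈L'} ‖Σ_{k∈K'} S_l A T_k ξ_k‖² ≤ ‖A‖² · Σ_{k∈K'} ‖ξ_k‖². -/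
open scoped InnerProductSpace ComplexConjugate

lemma sum_sq_le_of_pos {I : Type*} {E : Type*}
    [NormedAddCommGroup E] [InnerProductSpace ℂ E] [CompleteSpace E]
    (B : I → (E →L[ℂ] E)) (I' : Finset I)
    (h : (1 - ∑ i ∈ I', (ContinuousLinearMap.adjoint (B i)).comp (B i)).IsPositive)
    (y : E) : ∑ i ∈ I', ‖B i y‖ ^ 2 ≤ ‖y‖ ^ 2 := by
  have h2 := h.2 y
  rw [ContinuousLinearMap.reApplyInnerSelf] at h2
  simp only [ContinuousLinearMap.sub_apply, ContinuousLinearMap.one_apply,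
    ContinuousLinearMap.sum_apply, ContinuousLinearMap.comp_apply, inner_sub_left,
    sum_inner, ContinuousLinearMap.adjoint_inner_left, map_sub, map_sum,
    inner_self_eq_norm_sq] at h2
  linarith

/-- **Row–column factorization estimate** (the computation in the proof of Proposition 10.5.1
of Bunke–Engel–Land showing that the multiplication functor is norm-bounded in the regular
representation): if `Σ T_k T_k* ≤ 1` over all finite subfamilies and `Σ S_l* S_l ≤ 1` over all
finite subfamilies, then for all finite index sets and all vectors `ξ_k` one has
`Σ_l ‖Σ_k S_l A T_k ξ_k‖² ≤ ‖A‖² Σ_k ‖ξ_k‖²`. -/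
theorem row_column_factorization_estimate
    {K L : Type*} {H H' : Type*}
    [NormedAddCommGroup H] [InnerProductSpace ℂ H] [CompleteSpace H]
    [NormedAddCommGroup H'] [InnerProductSpace ℂ H'] [CompleteSpace H']
    (A : H →L[ℂ] H')
    (T : K → (H →L[ℂ] H)) (S : L → (H' →L[ℂ] H'))
    (hT : ∀ K' : Finset K,
      (1 - ∑ k ∈ K', (T k).comp (ContinuousLinearMap.adjoint (T k))).IsPositive)
    (hS : ∀ L' : Finset L,
      (1 - ∑ l ∈ L', (ContinuousLinearMap.adjoint (S l)).comp (S l)).IsPositive) :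
    ∀ (K' : Finset K) (L' : Finset L) (ξ : K → H),
      ∑ l ∈ L', ‖∑ k ∈ K', S l (A (T k (ξ k)))‖ ^ 2 ≤
        ‖A‖ ^ 2 * ∑ k ∈ K', ‖ξ k‖ ^ 2 := by
  intro K' L' ξ
  set x : H := ∑ k ∈ K', T k (ξ k) with hxdef
  -- row estimate: ∀ z, ∑ ‖(T k)* z‖² ≤ ‖z‖²
  have hrow : ∀ z : H, ∑ k ∈ K', ‖(ContinuousLinearMap.adjoint (T k)) z‖ ^ 2 ≤ ‖z‖ ^ 2 := by
    intro z
    apply sum_sq_le_of_pos (fun k => ContinuousLinearMap.adjoint (T k)) K'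
    simpa [ContinuousLinearMap.adjoint_adjoint] using hT K'
  set Sξ : ℝ := ∑ k ∈ K', ‖ξ k‖ ^ 2 with hSdef
  have hSξ : 0 ≤ Sξ := Finset.sum_nonneg fun k _ => sq_nonneg _
  -- ‖x‖² ≤ Sξ
  have hx : ‖x‖ ^ 2 ≤ Sξ := by
    have h1 : ‖x‖ ^ 2 = ∑ k ∈ K', Complex.re ⟪ξ k, (ContinuousLinearMap.adjoint (T k)) x⟫_ℂ := by
      rw [← inner_self_eq_norm_sq (𝕜 := ℂ) x]
      conv_lhs => rw [hxdef]
      rw [sum_inner, map_sum]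
      exact Finset.sum_congr rfl fun k _ => by
        rw [← hxdef, ContinuousLinearMap.adjoint_inner_right]; rfl
    have h2 : ‖x‖ ^ 2 ≤ ∑ k ∈ K', ‖ξ k‖ * ‖(ContinuousLinearMap.adjoint (T k)) x‖ := by
      rw [h1]
      exact Finset.sum_le_sum fun k _ => re_inner_le_norm (𝕜 := ℂ) _ _
    have h3 : (∑ k ∈ K', ‖ξ k‖ * ‖(ContinuousLinearMap.adjoint (T k)) x‖) ^ 2 ≤
        Sξ * ∑ k ∈ K', ‖(ContinuousLinearMap.adjoint (T k)) x‖ ^ 2 := by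
      exact Finset.sum_mul_sq_le_sq_mul_sq K' _ _
    have h4 := hrow x
    nlinarith [sq_nonneg (‖x‖), norm_nonneg x, sq_nonneg (‖x‖ ^ 2 - Sξ)]
  -- rewrite the inner sum as S l (A x)
  have hrw : ∀ l, ∑ k ∈ K', S l (A (T k (ξ k))) = S l (A x) := fun l => by
    rw [hxdef, map_sum, map_sum]
  calc ∑ l ∈ L', ‖∑ k ∈ K', S l (A (T k (ξ k)))‖ ^ 2
      = ∑ l ∈ L', ‖S l (A x)‖ ^ 2 := by
        exact Finset.sum_congr rfl fun l _ => by rw [hrw l]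
    _ ≤ ‖A x‖ ^ 2 := sum_sq_le_of_pos S L' (hS L') (A x)
    _ ≤ (‖A‖ * ‖x‖) ^ 2 := by
        have := A.le_opNorm x
        exact pow_le_pow_left₀ (norm_nonneg _) this 2
    _ ≤ ‖A‖ ^ 2 * Sξ := by
        rw [mul_pow]
        exact mul_le_mul_of_nonneg_left hx (sq_nonneg _)
end
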